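/- arXiv:2501.15301 — 7 statements merged into one kernel-verified Lean document; each statement's English description precedes it below -/
import Mathlib

section
/- Assume s : 𝒳 → 𝒮 and t : 𝒴 → 𝒯 are given. Then the following are equivalent: (1) s and t are both sufficient (X−S−Y and X−T−Y); (2) for all x ∈ 𝒳 and y ∈ 𝒴, p(x,y)·pS(s(x))·pT(t(y)) = pX(x)·pY(y)·pST(s(x),t(y)) (equivalently, the density ratio p(x,y)/(pX(x)pY(y)) equals pST(s(x),t(y))/(pS(s(x))pT(t(y)))); (3) the Markov chain factorization X−S−T−Y holds: p(x,y) = (pX(x)/pS(s(x)))·pST(s(x),t(y))·(pY(y)/pT(t(y))) for all x,y. -/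
open Finset

noncomputable section
open scoped Classical

variable {𝒳 𝒴 𝒮 𝒯 : Type*}

/-- Marginal of a joint pmf on the first coordinate. -/
def margX [Fintype 𝒴] (p : 𝒳 × 𝒴 → ℝ) (x : 𝒳) : ℝ := ∑ y, p (x, y)

/-- Marginal of a joint pmf on the second coordinate. -/
def margY [Fintype 𝒳] (p : 𝒳 × 𝒴 → ℝ) (y : 𝒴) : ℝ := ∑ x, p (x, y)

/-- Distribution of `S = s(X)`. -/
def margS [Fintype 𝒳] [Fintype 𝒴] (p : 𝒳 × 𝒴 → ℝ) (s : 𝒳 → 𝒮) (s0 : 𝒮) : ℝ :=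
  ∑ x ∈ Finset.univ.filter (fun x => s x = s0), margX p x

/-- Distribution of `T = t(Y)`. -/
def margT [Fintype 𝒳] [Fintype 𝒴] (p : 𝒳 × 𝒴 → ℝ) (t : 𝒴 → 𝒯) (t0 : 𝒯) : ℝ :=
  ∑ y ∈ Finset.univ.filter (fun y => t y = t0), margY p y

/-- Joint distribution of `(S, T) = (s(X), t(Y))`. -/
def margST [Fintype 𝒳] [Fintype 𝒴] (p : 𝒳 × 𝒴 → ℝ) (s : 𝒳 → 𝒮) (t : 𝒴 → 𝒯)
    (w : 𝒮 × 𝒯) : ℝ :=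
  ∑ x ∈ Finset.univ.filter (fun x => s x = w.1),
    ∑ y ∈ Finset.univ.filter (fun y => t y = w.2), p (x, y)

/-- `q` is a probability mass function. -/
def IsPMF {Z : Type*} [Fintype Z] (q : Z → ℝ) : Prop := (∀ z, 0 ≤ q z) ∧ ∑ z, q z = 1

/-- `s` is a sufficient statistic of `X` for `Y` (Markov chain `X - S - Y`). -/
def SuffS [Fintype 𝒴] (p : 𝒳 × 𝒴 → ℝ) (s : 𝒳 → 𝒮) : Prop :=
  ∀ x x' y, s x = s x' → p (x, y) * margX p x' = p (x', y) * margX p x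

/-- `t` is a sufficient statistic of `Y` for `X` (Markov chain `X - T - Y`). -/
def SuffT [Fintype 𝒳] (p : 𝒳 × 𝒴 → ℝ) (t : 𝒴 → 𝒯) : Prop :=
  ∀ x y y', t y = t y' → p (x, y) * margY p y' = p (x, y') * margY p y

/-- Mutual information of a joint pmf on `A × B`. -/
def mutInfo {A B : Type*} [Fintype A] [Fintype B] (q : A × B → ℝ) : ℝ :=
  ∑ z : A × B, if 0 < q z then
    q z * Real.log (q z / ((∑ b, q (z.1, b)) * (∑ a, q (a, z.2)))) else 0

/-- Shannon entropy of a pmf on a finite type. -/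
def entropy {W : Type*} [Fintype W] (r : W → ℝ) : ℝ :=
  -∑ w, if 0 < r w then r w * Real.log (r w) else 0

/-- Wyner's common information of a joint pmf `m` on `A × B`. -/
def wynerCI {A B : Type*} [Fintype A] [Fintype B] (m : A × B → ℝ) : ℝ :=
  sInf { c | ∃ (n : ℕ) (q : A × B × Fin n → ℝ),
    IsPMF q ∧
    (∀ a b, ∑ w, q (a, b, w) = m (a, b)) ∧
    (∀ a b w, q (a, b, w) * (∑ a', ∑ b', q (a', b', w)) =
      (∑ b', q (a, b', w)) * (∑ a', q (a', b, w))) ∧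
    c = mutInfo (fun z : Fin n × (A × B) => q (z.2.1, z.2.2, z.1)) }

/-- Gács–Körner common information of a joint pmf `m` on `A × B`. -/
def gkCI {A B : Type*} [Fintype A] [Fintype B] (m : A × B → ℝ) : ℝ :=
  sSup { c | ∃ (n : ℕ) (f : A → Fin n) (g : B → Fin n),
    (∑ z : A × B, if f z.1 ≠ g z.2 then m z else 0) = 0 ∧
    c = entropy (fun w : Fin n =>
      ∑ a ∈ Finset.univ.filter (fun a => f a = w), ∑ b, m (a, b)) }

/-- Information-bottleneck Lagrangian value. -/
def ibL {A B : Type*} [Fintype A] [Fintype B] (m : A × B → ℝ) (β : ℝ) : ℝ :=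
  sInf { c | ∃ (n : ℕ) (r : A → Fin n → ℝ),
    (∀ a u, 0 ≤ r a u) ∧ (∀ a, ∑ u, r a u = 1) ∧
    c = mutInfo (fun z : Fin n × A => r z.2 z.1 * ∑ b, m (z.2, b))
        - β * mutInfo (fun z : Fin n × B => ∑ a, r a z.1 * m (a, z.2)) }

/-- Information-bottleneck curve. -/
def ibCurve {A B : Type*} [Fintype A] [Fintype B] (m : A × B → ℝ) (R : ℝ) : ℝ :=
  sSup { c | ∃ (n : ℕ) (r : A → Fin n → ℝ),
    (∀ a u, 0 ≤ r a u) ∧ (∀ a, ∑ u, r a u = 1) ∧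
    mutInfo (fun z : Fin n × A => r z.2 z.1 * ∑ b, m (z.2, b)) ≤ R ∧
    c = mutInfo (fun z : Fin n × B => ∑ a, r a z.1 * m (a, z.2)) }



lemma margS_pos' [Fintype 𝒳] [Fintype 𝒴] (p : 𝒳 × 𝒴 → ℝ) (s : 𝒳 → 𝒮)
    (hX : ∀ x, 0 < margX p x) (x : 𝒳) : 0 < margS p s (s x) :=
  Finset.sum_pos (fun i _ => hX i) ⟨x, by simp⟩

lemma margT_pos' [Fintype 𝒳] [Fintype 𝒴] (p : 𝒳 × 𝒴 → ℝ) (t : 𝒴 → 𝒯)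
    (hY : ∀ y, 0 < margY p y) (y : 𝒴) : 0 < margT p t (t y) :=
  Finset.sum_pos (fun i _ => hY i) ⟨y, by simp⟩

lemma suffS_key [Fintype 𝒳] [Fintype 𝒴] (p : 𝒳 × 𝒴 → ℝ) (s : 𝒳 → 𝒮)
    (hS : SuffS p s) (x : 𝒳) (y : 𝒴) :
    p (x, y) * margS p s (s x)
      = margX p x * ∑ x' ∈ Finset.univ.filter (fun x' => s x' = s x), p (x', y) := by
  unfold margS
  rw [Finset.mul_sum, Finset.mul_sum]
  refine Finset.sum_congr rfl fun x' hx' => ?_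
  simp only [Finset.mem_filter] at hx'
  rw [hS x x' y hx'.2.symm, mul_comm]

lemma suffT_key [Fintype 𝒳] [Fintype 𝒴] (p : 𝒳 × 𝒴 → ℝ) (s : 𝒳 → 𝒮) (t : 𝒴 → 𝒯)
    (hT : SuffT p t) (s0 : 𝒮) (y : 𝒴) :
    (∑ x' ∈ Finset.univ.filter (fun x' => s x' = s0), p (x', y)) * margT p t (t y)
      = margY p y * margST p s t (s0, t y) := by
  unfold margT margST
  rw [Finset.sum_mul_sum, Finset.mul_sum]
  refine Finset.sum_congr rfl fun x' _ => ?_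
  rw [Finset.mul_sum]
  refine Finset.sum_congr rfl fun y' hy' => ?_
  simp only [Finset.mem_filter] at hy'
  rw [hT x' y y' hy'.2.symm, mul_comm]

/-- Equivalent characterizations of sufficiency of `s` and `t`. -/
theorem sufficiency_tfae
    [Fintype 𝒳] [Nonempty 𝒳] [Fintype 𝒴] [Nonempty 𝒴]
    [Fintype 𝒮] [Nonempty 𝒮] [Fintype 𝒯] [Nonempty 𝒯]
    (p : 𝒳 × 𝒴 → ℝ) (hp : IsPMF p)
    (hX : ∀ x, 0 < margX p x) (hY : ∀ y, 0 < margY p y)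
    (s : 𝒳 → 𝒮) (t : 𝒴 → 𝒯) :
    ((SuffS p s ∧ SuffT p t) ↔
      (∀ x y, p (x, y) * margS p s (s x) * margT p t (t y)
        = margX p x * margY p y * margST p s t (s x, t y)))
    ∧
    ((∀ x y, p (x, y) * margS p s (s x) * margT p t (t y)
        = margX p x * margY p y * margST p s t (s x, t y)) ↔
      (∀ x y, p (x, y)
        = margX p x / margS p s (s x) * margST p s t (s x, t y)
          * (margY p y / margT p t (t y)))) := by
  have hSpos : ∀ x : 𝒳, 0 < margS p s (s x) := margS_pos' p s hX
  have hTpos : ∀ y : 𝒴, 0 < margT p t (t y) := margT_pos' p t hY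
  constructor
  · constructor
    · rintro ⟨hS, hT⟩ x y
      have h1 := suffS_key p s hS x y
      have h2 := suffT_key p s t hT (s x) y
      calc p (x, y) * margS p s (s x) * margT p t (t y)
          = margX p x * ((∑ x' ∈ Finset.univ.filter (fun x' => s x' = s x), p (x', y))
              * margT p t (t y)) := by rw [h1]; ring
        _ = margX p x * margY p y * margST p s t (s x, t y) := by rw [h2]; ring
    · intro h
      constructor
      · intro x x' y hxx'
        have h1 := h x y
        have h2 := h x' y
        rw [← hxx'] at h2
        have key : (p (x, y) * margX p x') * (margS p s (s x) * margT p t (t y))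
            = (p (x', y) * margX p x) * (margS p s (s x) * margT p t (t y)) := by
          linear_combination margX p x' * h1 - margX p x * h2
        exact mul_right_cancel₀ (mul_pos (hSpos x) (hTpos y)).ne' key
      · intro x y y' hyy'
        have h1 := h x y
        have h2 := h x y'
        rw [← hyy'] at h2
        have key : (p (x, y) * margY p y') * (margS p s (s x) * margT p t (t y))
            = (p (x, y') * margY p y) * (margS p s (s x) * margT p t (t y)) := by
          linear_combination margY p y' * h1 - margY p y * h2
        exact mul_right_cancel₀ (mul_pos (hSpos x) (hTpos y)).ne' key
  · constructor
    · intro h x y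
      have h1 := h x y
      have hs := (hSpos x).ne'
      have ht := (hTpos y).ne'
      field_simp
      linear_combination h1
    · intro h x y
      have h1 := h x y
      have hs := (hSpos x).ne'
      have ht := (hTpos y).ne'
      rw [h1]
      field_simp


end
end

section
/- If s : 𝒳 → 𝒮 and t : 𝒴 → 𝒯 are both sufficient, then the mutual information is preserved: I_p(X;Y) = I_{pST}(S;T), i.e. ∑_{(x,y) : p(x,y)>0} p(x,y)·log(p(x,y)/(pX(x)·pY(y))) = ∑_{(s0,t0) : pST(s0,t0)>0} pST(s0,t0)·log(pST(s0,t0)/(pS(s0)·pT(t0))). -/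
open Finset

noncomputable section
open scoped Classical

variable {𝒳 𝒴 𝒮 𝒯 : Type*}

/-- Mutual information is preserved under sufficient statistics. -/
theorem mutual_information_preserved
    [Fintype 𝒳] [Nonempty 𝒳] [Fintype 𝒴] [Nonempty 𝒴]
    [Fintype 𝒮] [Nonempty 𝒮] [Fintype 𝒯] [Nonempty 𝒯]
    (p : 𝒳 × 𝒴 → ℝ) (hp : IsPMF p)
    (hX : ∀ x, 0 < margX p x) (hY : ∀ y, 0 < margY p y)
    (s : 𝒳 → 𝒮) (t : 𝒴 → 𝒯)
    (hs : SuffS p s) (ht : SuffT p t) :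
    (∑ z : 𝒳 × 𝒴, if 0 < p z then
        p z * Real.log (p z / (margX p z.1 * margY p z.2)) else 0)
    = ∑ w : 𝒮 × 𝒯, if 0 < margST p s t w then
        margST p s t w
          * Real.log (margST p s t w / (margS p s w.1 * margT p t w.2)) else 0 := by

  have hp0 : ∀ z, 0 ≤ p z := hp.1
  -- Lemma A: summing sufficiency over the fiber of s
  have hA : ∀ x y, p (x, y) * margS p s (s x)
      = (∑ x' ∈ Finset.univ.filter (fun x' => s x' = s x), p (x', y)) * margX p x := by
    intro x y
    rw [margS, Finset.mul_sum, Finset.sum_mul]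
    refine Finset.sum_congr rfl fun x' hx' => ?_
    simp only [Finset.mem_filter] at hx'
    exact hs x x' y hx'.2.symm
  -- Lemma B: summing sufficiency of t over the fiber of t
  have hB : ∀ (s0 : 𝒮) (y : 𝒴),
      (∑ x' ∈ Finset.univ.filter (fun x' => s x' = s0), p (x', y)) * margT p t (t y)
      = margST p s t (s0, t y) * margY p y := by
    intro s0 y
    have hST : margST p s t (s0, t y)
        = ∑ y' ∈ Finset.univ.filter (fun y' => t y' = t y),
            ∑ x' ∈ Finset.univ.filter (fun x' => s x' = s0), p (x', y') := by
      rw [margST]; exact Finset.sum_comm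
    rw [margT, Finset.mul_sum, hST, Finset.sum_mul]
    refine Finset.sum_congr rfl fun y' hy' => ?_
    simp only [Finset.mem_filter] at hy'
    rw [margY, Finset.sum_mul, Finset.sum_mul, margY]
    refine Finset.sum_congr rfl fun x' _ => ?_
    have := ht x' y y' hy'.2.symm
    rw [margY, margY] at this
    exact this
  -- Key identity
  have hkey : ∀ x y, p (x, y) * margS p s (s x) * margT p t (t y)
      = margST p s t (s x, t y) * margX p x * margY p y := by
    intro x y
    calc p (x, y) * margS p s (s x) * margT p t (t y)
        = ((∑ x' ∈ Finset.univ.filter (fun x' => s x' = s x), p (x', y)) * margX p x)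
            * margT p t (t y) := by rw [hA]
      _ = ((∑ x' ∈ Finset.univ.filter (fun x' => s x' = s x), p (x', y))
            * margT p t (t y)) * margX p x := by ring
      _ = (margST p s t (s x, t y) * margY p y) * margX p x := by rw [hB]
      _ = margST p s t (s x, t y) * margX p x * margY p y := by ring
  -- positivity of margS / margT on the image
  have hS : ∀ x, 0 < margS p s (s x) := by
    intro x
    rw [margS]
    refine Finset.sum_pos (fun x' _ => hX x') ⟨x, ?_⟩
    simp
  have hT : ∀ y, 0 < margT p t (t y) := by
    intro y
    rw [margT]
    refine Finset.sum_pos (fun y' _ => hY y') ⟨y, ?_⟩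
    simp
  -- margST as a sum over the fiber in the product
  have hfiber : ∀ w : 𝒮 × 𝒯, margST p s t w
      = ∑ z ∈ Finset.univ.filter (fun z : 𝒳 × 𝒴 => (s z.1, t z.2) = w), p z := by
    intro w
    have hr : ∑ z ∈ Finset.univ.filter (fun z : 𝒳 × 𝒴 => (s z.1, t z.2) = w), p z
        = ∑ x, ∑ y, if (s x, t y) = w then p (x, y) else 0 := by
      rw [Finset.sum_filter, Fintype.sum_prod_type]
    rw [hr, margST, Finset.sum_filter]
    refine Finset.sum_congr rfl fun x _ => ?_
    by_cases h1 : s x = w.1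
    · rw [if_pos h1, Finset.sum_filter]
      refine Finset.sum_congr rfl fun y _ => ?_
      by_cases h2 : t y = w.2
      · rw [if_pos h2, if_pos (by rw [h1, h2])]
      · rw [if_neg h2, if_neg (by simp [Prod.ext_iff, h2])]
    · rw [if_neg h1]
      refine (Finset.sum_eq_zero fun y _ => ?_).symm
      rw [if_neg (by simp [Prod.ext_iff, h1])]
  have hST0 : ∀ w : 𝒮 × 𝒯, 0 ≤ margST p s t w := by
    intro w
    rw [hfiber]
    exact Finset.sum_nonneg fun z _ => hp0 z
  -- per-fiber identity
  have hterm : ∀ w : 𝒮 × 𝒯,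
      (∑ z ∈ Finset.univ.filter (fun z : 𝒳 × 𝒴 => (s z.1, t z.2) = w),
        (if 0 < p z then p z * Real.log (p z / (margX p z.1 * margY p z.2)) else 0))
      = (if 0 < margST p s t w then
          margST p s t w * Real.log (margST p s t w / (margS p s w.1 * margT p t w.2))
        else 0) := by
    intro w
    by_cases hw : 0 < margST p s t w
    · rw [if_pos hw]
      have hstep : ∀ z ∈ Finset.univ.filter (fun z : 𝒳 × 𝒴 => (s z.1, t z.2) = w),
          (if 0 < p z then p z * Real.log (p z / (margX p z.1 * margY p z.2)) else 0)
          = p z * Real.log (margST p s t w / (margS p s w.1 * margT p t w.2)) := by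
        intro z hz
        simp only [Finset.mem_filter] at hz
        obtain ⟨x, y⟩ := z
        obtain ⟨h1, h2⟩ : s x = w.1 ∧ t y = w.2 := Prod.mk.injEq .. ▸ Prod.ext_iff.1 hz.2
        by_cases hpz : 0 < p (x, y)
        · rw [if_pos hpz]
          have hk := hkey x y
          rw [h1, h2, Prod.mk.eta] at hk
          have hratio : p (x, y) / (margX p x * margY p y)
              = margST p s t w / (margS p s w.1 * margT p t w.2) := by
            have hs1 : 0 < margS p s w.1 := h1 ▸ hS x
            have ht1 : 0 < margT p t w.2 := h2 ▸ hT y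
            rw [div_eq_div_iff (mul_pos (hX x) (hY y)).ne' (mul_pos hs1 ht1).ne']
            linear_combination hk
          simp only [hratio]
        · rw [if_neg hpz]
          have : p (x, y) = 0 := le_antisymm (not_lt.1 hpz) (hp0 (x, y))
          rw [this, zero_mul]
      rw [Finset.sum_congr rfl hstep, ← Finset.sum_mul, ← hfiber w]
    · rw [if_neg hw]
      have h0 : ∑ z ∈ Finset.univ.filter (fun z : 𝒳 × 𝒴 => (s z.1, t z.2) = w), p z = 0 := by
        rw [← hfiber w]; exact le_antisymm (not_lt.1 (hfiber w ▸ hw)) (hST0 w) |>.symm ▸ rfl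
      have hz0 : ∀ z ∈ Finset.univ.filter (fun z : 𝒳 × 𝒴 => (s z.1, t z.2) = w), p z = 0 := by
        intro z hz
        have := (Finset.sum_eq_zero_iff_of_nonneg (fun z _ => hp0 z)).1 h0
        exact this z hz
      refine Finset.sum_eq_zero fun z hz => ?_
      rw [if_neg (by rw [hz0 z hz]; exact lt_irrefl 0)]
  calc (∑ z : 𝒳 × 𝒴, if 0 < p z then
          p z * Real.log (p z / (margX p z.1 * margY p z.2)) else 0)
      = ∑ w : 𝒮 × 𝒯, ∑ z ∈ Finset.univ.filter (fun z : 𝒳 × 𝒴 => (s z.1, t z.2) = w),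
          (if 0 < p z then p z * Real.log (p z / (margX p z.1 * margY p z.2)) else 0) :=
        (Finset.sum_fiberwise _ _ _).symm
    _ = _ := Finset.sum_congr rfl fun w _ => hterm w

end
end

section
/- Let f : ℝ → ℝ be convex on [0,∞) with f(1) = 0. If s : 𝒳 → 𝒮 and t : 𝒴 → 𝒯 are both sufficient, then the f-information is preserved: ∑_{x,y} pX(x)·pY(y)·f( p(x,y)/(pX(x)·pY(y)) ) = ∑_{s0,t0} pS(s0)·pT(t0)·f( pST(s0,t0)/(pS(s0)·pT(t0)) ), where terms with pS(s0) = 0 or pT(t0) = 0 are taken to be 0. -/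
open Finset

noncomputable section
open scoped Classical

variable {𝒳 𝒴 𝒮 𝒯 : Type*}

/-- `f`-information is preserved under sufficient statistics. -/
theorem f_information_preserved
    [Fintype 𝒳] [Nonempty 𝒳] [Fintype 𝒴] [Nonempty 𝒴]
    [Fintype 𝒮] [Nonempty 𝒮] [Fintype 𝒯] [Nonempty 𝒯]
    (p : 𝒳 × 𝒴 → ℝ) (hp : IsPMF p)
    (hX : ∀ x, 0 < margX p x) (hY : ∀ y, 0 < margY p y)
    (s : 𝒳 → 𝒮) (t : 𝒴 → 𝒯)
    (hs : SuffS p s) (ht : SuffT p t)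
    (f : ℝ → ℝ) (hf : ConvexOn ℝ (Set.Ici 0) f) (hf1 : f 1 = 0) :
    (∑ z : 𝒳 × 𝒴,
        margX p z.1 * margY p z.2 * f (p z / (margX p z.1 * margY p z.2)))
    = ∑ w : 𝒮 × 𝒯,
        if margS p s w.1 = 0 ∨ margT p t w.2 = 0 then 0
        else margS p s w.1 * margT p t w.2
          * f (margST p s t w / (margS p s w.1 * margT p t w.2)) := by
  classical
  -- key pointwise identity
  have key : ∀ x y, margST p s t (s x, t y) * (margX p x * margY p y)
      = p (x, y) * (margS p s (s x) * margT p t (t y)) := by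
    intro x y
    unfold margST margS margT
    rw [Finset.sum_mul]
    rw [show (∑ x' ∈ Finset.univ.filter (fun x' => s x' = s x), margX p x') *
        (∑ y' ∈ Finset.univ.filter (fun y' => t y' = t y), margY p y')
        = ∑ x' ∈ Finset.univ.filter (fun x' => s x' = s x),
            ∑ y' ∈ Finset.univ.filter (fun y' => t y' = t y),
              margX p x' * margY p y' from Finset.sum_mul_sum _ _ _ _,
        Finset.mul_sum]
    refine Finset.sum_congr rfl fun x' hx' => ?_
    rw [Finset.sum_mul, Finset.mul_sum]
    refine Finset.sum_congr rfl fun y' hy' => ?_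
    simp only [Finset.mem_filter] at hx' hy'
    have h1 := hs x x' y' hx'.2.symm
    have h2 := ht x y y' hy'.2.symm
    linear_combination -margY p y * h1 - margX p x' * h2
  rw [← Finset.sum_fiberwise (Finset.univ : Finset (𝒳 × 𝒴))
      (fun z : 𝒳 × 𝒴 => (s z.1, t z.2))
      (fun z => margX p z.1 * margY p z.2 * f (p z / (margX p z.1 * margY p z.2)))]
  refine Finset.sum_congr rfl fun w _ => ?_
  obtain ⟨s0, t0⟩ := w
  have hfib : Finset.univ.filter (fun z : 𝒳 × 𝒴 => (s z.1, t z.2) = (s0, t0))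
      = (Finset.univ.filter (fun x => s x = s0)) ×ˢ
        (Finset.univ.filter (fun y => t y = t0)) := by
    ext z
    simp [Prod.ext_iff, and_comm]
  rw [hfib, Finset.sum_product]
  by_cases hA : (Finset.univ.filter (fun x => s x = s0)).Nonempty
  · by_cases hB : (Finset.univ.filter (fun y => t y = t0)).Nonempty
    · have hS : 0 < margS p s s0 := Finset.sum_pos (fun x _ => hX x) hA
      have hT : 0 < margT p t t0 := Finset.sum_pos (fun y _ => hY y) hB
      rw [if_neg (by push_neg; exact ⟨hS.ne', hT.ne'⟩)]
      set K := f (margST p s t (s0, t0) / (margS p s s0 * margT p t t0)) with hK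
      have hrat : ∀ x ∈ Finset.univ.filter (fun x => s x = s0),
          ∀ y ∈ Finset.univ.filter (fun y => t y = t0),
          p (x, y) / (margX p x * margY p y)
            = margST p s t (s0, t0) / (margS p s s0 * margT p t t0) := by
        intro x hx y hy
        simp only [Finset.mem_filter] at hx hy
        have := key x y
        rw [hx.2, hy.2] at this
        rw [div_eq_div_iff (mul_pos (hX x) (hY y)).ne' (mul_pos hS hT).ne']
        linarith [this]
      calc (∑ x ∈ Finset.univ.filter (fun x => s x = s0),
              ∑ y ∈ Finset.univ.filter (fun y => t y = t0),
              margX p x * margY p y * f (p (x, y) / (margX p x * margY p y)))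
          = ∑ x ∈ Finset.univ.filter (fun x => s x = s0),
              ∑ y ∈ Finset.univ.filter (fun y => t y = t0),
              margX p x * margY p y
                * K := by
            refine Finset.sum_congr rfl fun x hx => Finset.sum_congr rfl fun y hy => ?_
            rw [hrat x hx y hy]
        _ = margS p s s0 * margT p t t0 * K := by
            rw [show margS p s s0 * margT p t t0
                = ∑ x ∈ Finset.univ.filter (fun x => s x = s0),
                    ∑ y ∈ Finset.univ.filter (fun y => t y = t0),
                      margX p x * margY p y from Finset.sum_mul_sum _ _ _ _,
              Finset.sum_mul]
            refine Finset.sum_congr rfl fun x hx => ?_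
            rw [Finset.sum_mul]
    · have hB' : Finset.univ.filter (fun y => t y = t0) = ∅ :=
        Finset.not_nonempty_iff_eq_empty.mp hB
      have : margT p t t0 = 0 := by unfold margT; rw [hB', Finset.sum_empty]
      rw [if_pos (Or.inr this), hB']
      simp
  · have hA' : Finset.univ.filter (fun x => s x = s0) = ∅ :=
      Finset.not_nonempty_iff_eq_empty.mp hA
    have : margS p s s0 = 0 := by unfold margS; rw [hA', Finset.sum_empty]
    rw [if_pos (Or.inl this), hA']
    simp

end
end

section
/- If s : 𝒳 → 𝒮 and t : 𝒴 → 𝒯 are both sufficient, then Wyner's common information is preserved: C_W(p) = C_W(pST). -/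
open Finset

noncomputable section
open scoped Classical

variable {𝒳 𝒴 𝒮 𝒯 : Type*}

lemma gibbs_point (a b : ℝ) (hb : 0 ≤ b) (hab : 0 < a → 0 < b) :
    a - b ≤ if 0 < a then a * Real.log (a / b) else 0 := by
  split_ifs with h
  · have hb' := hab h
    have h1 : Real.log (b / a) ≤ b / a - 1 := Real.log_le_sub_one_of_pos (by positivity)
    have hlog : Real.log (a / b) = - Real.log (b / a) := by
      rw [← Real.log_inv]; congr 1; field_simp
    rw [hlog]
    have h2 := mul_le_mul_of_nonneg_left h1 h.le
    have h3 : a * (b / a) = b := by field_simp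
    nlinarith
  · push_neg at h
    nlinarith

/-- Gibbs inequality for a finite family. -/
lemma gibbs_sum {ι : Type*} (s : Finset ι) (f g : ι → ℝ) (hg : ∀ i ∈ s, 0 ≤ g i)
    (hfg : ∀ i ∈ s, 0 < f i → 0 < g i) :
    ∑ i ∈ s, f i - ∑ i ∈ s, g i ≤
      ∑ i ∈ s, (if 0 < f i then f i * Real.log (f i / g i) else 0) := by
  rw [← Finset.sum_sub_distrib]
  exact Finset.sum_le_sum fun i hi => gibbs_point _ _ (hg i hi) (hfg i hi)

/-- Lifting a coupling along a stochastically-split deterministic map preserves mutual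
information. -/
lemma mutInfo_lift {W A C : Type*} [Fintype W] [Fintype A] [Fintype C]
    (q : W × C → ℝ) (h0 : ∀ z, 0 ≤ q z) (φ : A → C) (α : A → ℝ) (hα : ∀ a, 0 ≤ α a)
    (hsum : ∀ c, (∑ a ∈ Finset.univ.filter (fun a => φ a = c), α a = 1) ∨ (∀ w, q (w, c) = 0)) :
    mutInfo (fun z : W × A => α z.2 * q (z.1, φ z.2)) = mutInfo q := by
  have hM1 : ∀ w : W, ∑ a, α a * q (w, φ a) = ∑ c, q (w, c) := by
    intro w
    rw [← Finset.sum_fiberwise Finset.univ φ (fun a => α a * q (w, φ a))]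
    refine Finset.sum_congr rfl fun c _ => ?_
    rw [show ∑ a ∈ Finset.univ.filter (fun a => φ a = c), α a * q (w, φ a)
        = ∑ a ∈ Finset.univ.filter (fun a => φ a = c), α a * q (w, c) from
      Finset.sum_congr rfl fun a ha => by rw [(Finset.mem_filter.1 ha).2]]
    rcases hsum c with h1 | h1
    · rw [← Finset.sum_mul, h1, one_mul]
    · rw [h1 w]; simp
  have hM2 : ∀ a : A, ∑ w, α a * q (w, φ a) = α a * ∑ w, q (w, φ a) := by
    intro a; rw [Finset.mul_sum]
  unfold mutInfo
  rw [Fintype.sum_prod_type, Fintype.sum_prod_type]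
  refine Finset.sum_congr rfl fun w _ => ?_
  rw [← Finset.sum_fiberwise Finset.univ φ
    (fun a => if 0 < α a * q (w, φ a) then (α a * q (w, φ a)) *
      Real.log ((α a * q (w, φ a)) /
        ((∑ b, α b * q (w, φ b)) * (∑ w', α a * q (w', φ a)))) else 0)]
  refine Finset.sum_congr rfl fun c _ => ?_
  rcases hsum c with hsc | hsc
  case inr =>
    rw [if_neg (by rw [hsc w]; exact lt_irrefl 0)]
    refine Finset.sum_eq_zero fun a ha => ?_
    rw [if_neg ?_]
    rw [(Finset.mem_filter.1 ha).2, hsc w, mul_zero]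
    exact lt_irrefl 0
  have key : ∀ a, φ a = c →
      (if 0 < α a * q (w, φ a) then (α a * q (w, φ a)) *
        Real.log ((α a * q (w, φ a)) /
          ((∑ b, α b * q (w, φ b)) * (∑ w', α a * q (w', φ a)))) else 0)
      = α a * (if 0 < q (w, c) then q (w, c) *
          Real.log (q (w, c) / ((∑ b, q (w, b)) * (∑ w', q (w', c)))) else 0) := by
    intro a ha
    rw [hM1, hM2, ha]
    rcases eq_or_lt_of_le (hα a) with hz | hz
    · rw [← hz]; simp
    · have hiff : (0 < α a * q (w, c)) ↔ (0 < q (w, c)) := by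
        constructor
        · intro h; by_contra hn; push_neg at hn
          nlinarith [h0 (w, c)]
        · intro h; positivity
      split_ifs with h1 h2 h2
      · have hq : 0 < q (w, c) := hiff.1 h1
        have harg : (α a * q (w, c)) / ((∑ b, q (w, b)) * (α a * ∑ w', q (w', c)))
            = q (w, c) / ((∑ b, q (w, b)) * (∑ w', q (w', c))) := by
          rw [show (∑ b, q (w, b)) * (α a * ∑ w', q (w', c))
              = α a * ((∑ b, q (w, b)) * (∑ w', q (w', c))) from by ring]
          rw [mul_div_mul_left _ _ (ne_of_gt hz)]
        rw [harg]; ring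
      · exact absurd (hiff.1 h1) h2
      · exact absurd (hiff.2 h2) h1
      · simp
  rw [show ∑ a ∈ Finset.univ.filter (fun a => φ a = c),
      (if 0 < α a * q (w, φ a) then (α a * q (w, φ a)) *
        Real.log ((α a * q (w, φ a)) /
          ((∑ b, α b * q (w, φ b)) * (∑ w', α a * q (w', φ a)))) else 0)
      = ∑ a ∈ Finset.univ.filter (fun a => φ a = c),
        α a * (if 0 < q (w, c) then q (w, c) *
          Real.log (q (w, c) / ((∑ b, q (w, b)) * (∑ w', q (w', c)))) else 0) from
    Finset.sum_congr rfl fun a ha => key a (Finset.mem_filter.1 ha).2]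
  rw [← Finset.sum_mul, hsc, one_mul]

/-- Data processing: merging symbols of the second coordinate cannot increase
mutual information. -/
lemma mutInfo_dpi {W A C : Type*} [Fintype W] [Fintype A] [Fintype C]
    (q : W × A → ℝ) (h0 : ∀ z, 0 ≤ q z) (φ : A → C) :
    mutInfo (fun z : W × C => ∑ a ∈ Finset.univ.filter (fun a => φ a = z.2), q (z.1, a))
      ≤ mutInfo q := by
  set qt : W × C → ℝ := fun z => ∑ a ∈ Finset.univ.filter (fun a => φ a = z.2), q (z.1, a)
    with hqt
  have hqt0 : ∀ z, 0 ≤ qt z := fun z => Finset.sum_nonneg fun a _ => h0 _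
  have hW : ∀ w : W, ∑ c, qt (w, c) = ∑ a, q (w, a) := fun w =>
    Finset.sum_fiberwise Finset.univ φ (fun a => q (w, a))
  have hC : ∀ c : C, ∑ w, qt (w, c) =
      ∑ a ∈ Finset.univ.filter (fun a => φ a = c), ∑ w, q (w, a) := by
    intro c; rw [Finset.sum_comm]
  unfold mutInfo
  rw [Fintype.sum_prod_type, Fintype.sum_prod_type]
  refine Finset.sum_le_sum fun w _ => ?_
  rw [← Finset.sum_fiberwise Finset.univ φ
    (fun a => if 0 < q (w, a) then q (w, a) *
      Real.log (q (w, a) / ((∑ b, q (w, b)) * (∑ w', q (w', a)))) else 0)]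
  refine Finset.sum_le_sum fun c _ => ?_
  -- notation
  set KW : ℝ := ∑ b, q (w, b) with hKW
  set Q : ℝ := qt (w, c) with hQ
  set KC : ℝ := ∑ w', qt (w', c) with hKC
  -- goal: T̃ ≤ ∑ over fiber of T
  show (if 0 < Q then Q * Real.log (Q / ((∑ b, qt (w, b)) * KC)) else 0) ≤ _
  rcases eq_or_lt_of_le (hqt0 (w, c)) with hz | hz
  · -- Q = 0 : every q (w,a) in the fiber is 0, both sides are 0
    have hnot : ¬ (0 < Q) := by rw [hQ, ← hz]; exact lt_irrefl 0
    rw [if_neg hnot]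
    have hall : ∀ a ∈ Finset.univ.filter (fun a => φ a = c), q (w, a) = 0 := by
      have := (Finset.sum_eq_zero_iff_of_nonneg (fun a _ => h0 (w, a))).1 hz.symm
      exact this
    refine le_of_eq ?_
    refine (Finset.sum_eq_zero fun a ha => ?_).symm
    rw [hall a ha]; simp
  · -- Q > 0
    have hQpos : 0 < Q := hz
    have hKWpos : 0 < KW := by
      have h1 : Q ≤ KW := by
        rw [hQ, hKW, hqt]
        exact Finset.sum_le_sum_of_subset_of_nonneg (Finset.filter_subset _ _)
          (fun a _ _ => h0 (w, a))
      linarith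
    have hKCpos : 0 < KC := by
      have h1 : Q ≤ KC := by
        rw [hKC, hQ]
        exact Finset.single_le_sum (f := fun w' => qt (w', c))
          (fun w' _ => hqt0 _) (Finset.mem_univ w)
      linarith
    have hWsum : ∑ b, qt (w, b) = KW := hW w
    rw [hWsum, if_pos hQpos]
    -- decompose each term over the fiber
    have hterm : ∀ a ∈ Finset.univ.filter (fun a => φ a = c),
        (if 0 < q (w, a) then q (w, a) * Real.log (q (w, a) / (KW * (∑ w', q (w', a)))) else 0)
        = (if 0 < q (w, a) then
            q (w, a) * Real.log (q (w, a) / ((∑ w', q (w', a)) * Q / KC)) else 0)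
          + q (w, a) * Real.log (Q / (KW * KC)) := by
      intro a _
      split_ifs with h
      · have hqa : 0 < q (w, a) := h
        have hMA : 0 < (∑ w', q (w', a)) :=
          lt_of_lt_of_le hqa (Finset.single_le_sum (f := fun w' => q (w', a))
            (fun _ _ => h0 _) (Finset.mem_univ w))
        have hsplit : q (w, a) / (KW * (∑ w', q (w', a)))
            = (q (w, a) / ((∑ w', q (w', a)) * Q / KC)) * (Q / (KW * KC)) := by
          field_simp
        rw [hsplit, Real.log_mul (by positivity) (by positivity)]
        ring
      · push_neg at h
        have : q (w, a) = 0 := le_antisymm h (h0 _)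
        rw [this]; simp
    rw [Finset.sum_congr rfl hterm, Finset.sum_add_distrib, ← Finset.sum_mul]
    have hQsum : ∑ a ∈ Finset.univ.filter (fun a => φ a = c), q (w, a) = Q := rfl
    rw [hQsum]
    -- Gibbs: the first sum is ≥ 0
    have hgibbs := gibbs_sum (Finset.univ.filter (fun a => φ a = c))
      (fun a => q (w, a)) (fun a => (∑ w', q (w', a)) * Q / KC)
      (fun a _ => by
        have : 0 ≤ ∑ w', q (w', a) := Finset.sum_nonneg fun _ _ => h0 _
        positivity)
      (fun a _ h => by
        have hMA : 0 < (∑ w', q (w', a)) :=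
          lt_of_lt_of_le h (Finset.single_le_sum (f := fun w' => q (w', a))
            (fun _ _ => h0 _) (Finset.mem_univ w))
        positivity)
    have hbsum : ∑ a ∈ Finset.univ.filter (fun a => φ a = c),
        (∑ w', q (w', a)) * Q / KC = Q := by
      have step : (∑ a ∈ Finset.univ.filter (fun a => φ a = c), (∑ w', q (w', a)) * Q / KC)
          = (∑ a ∈ Finset.univ.filter (fun a => φ a = c), (∑ w', q (w', a))) * Q / KC := by
        simp [div_eq_mul_inv, Finset.sum_mul]
      rw [step, ← hC c, ← hKC]
      field_simp
    rw [hQsum, hbsum, sub_self] at hgibbs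
    linarith


lemma mutInfo_dpi' {W A C : Type*} [Fintype W] [Fintype A] [Fintype C]
    (q : W × A → ℝ) (h0 : ∀ z, 0 ≤ q z) (φ : A → C) (qt : W × C → ℝ)
    (hqt : ∀ w c, qt (w, c) = ∑ a ∈ Finset.univ.filter (fun a => φ a = c), q (w, a)) :
    mutInfo qt ≤ mutInfo q := by
  have h : qt = fun z : W × C => ∑ a ∈ Finset.univ.filter (fun a => φ a = z.2), q (z.1, a) :=
    funext fun z => hqt z.1 z.2
  rw [h]
  exact mutInfo_dpi q h0 φ


lemma marg_le {A B : Type*} [Fintype A] [Fintype B] (q : A × B → ℝ)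
    (h0 : ∀ z, 0 ≤ q z) (z : A × B) : q z ≤ ∑ b, q (z.1, b) := by
  have := Finset.single_le_sum (f := fun b => q (z.1, b))
    (fun b _ => h0 _) (Finset.mem_univ z.2)
  simpa using this

lemma marg_le' {A B : Type*} [Fintype A] [Fintype B] (q : A × B → ℝ)
    (h0 : ∀ z, 0 ≤ q z) (z : A × B) : q z ≤ ∑ a, q (a, z.2) := by
  have := Finset.single_le_sum (f := fun a => q (a, z.2))
    (fun a _ => h0 _) (Finset.mem_univ z.1)
  simpa using this

lemma mutInfo_nonneg {A B : Type*} [Fintype A] [Fintype B] (q : A × B → ℝ)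
    (h0 : ∀ z, 0 ≤ q z) (h1 : ∑ z, q z = 1) : 0 ≤ mutInfo q := by
  have hA : ∑ a, ∑ b, q (a, b) = 1 := by rw [← Fintype.sum_prod_type]; exact h1
  have hS : ∑ z : A × B, (∑ b, q (z.1, b)) * (∑ a, q (a, z.2)) = 1 := by
    rw [Fintype.sum_prod_type]
    simp only [← Finset.sum_mul, ← Finset.mul_sum]
    rw [hA, one_mul, Finset.sum_comm, hA]
  have key : ∀ z : A × B, q z - (∑ b, q (z.1, b)) * (∑ a, q (a, z.2)) ≤
      (if 0 < q z then q z * Real.log (q z / ((∑ b, q (z.1, b)) * (∑ a, q (a, z.2)))) else 0) := by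
    intro z
    refine gibbs_point _ _ (mul_nonneg (Finset.sum_nonneg fun _ _ => h0 _) (Finset.sum_nonneg fun _ _ => h0 _)) (fun h => ?_)
    exact mul_pos (lt_of_lt_of_le h (marg_le q h0 z)) (lt_of_lt_of_le h (marg_le' q h0 z))
  have := Finset.sum_le_sum (fun z (_ : z ∈ Finset.univ) => key z)
  rw [Finset.sum_sub_distrib, h1, hS] at this
  simpa [mutInfo] using this


lemma sum_reindex {A B : Type*} [Fintype A] [Fintype B] {n : ℕ} (q : A × B × Fin n → ℝ) :
    ∑ z : Fin n × (A × B), q (z.2.1, z.2.2, z.1) = ∑ z, q z := by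
  simp only [Fintype.sum_prod_type]
  rw [Finset.sum_comm]
  exact Finset.sum_congr rfl fun a _ => Finset.sum_comm

lemma wyner_nonempty {A B : Type*} [Fintype A] [Fintype B] (m : A × B → ℝ) (hm : IsPMF m) :
    {c | ∃ (n : ℕ) (q : A × B × Fin n → ℝ),
      IsPMF q ∧
      (∀ a b, ∑ w, q (a, b, w) = m (a, b)) ∧
      (∀ a b w, q (a, b, w) * (∑ a', ∑ b', q (a', b', w)) =
        (∑ b', q (a, b', w)) * (∑ a', q (a', b, w))) ∧
      c = mutInfo (fun z : Fin n × (A × B) => q (z.2.1, z.2.2, z.1))}.Nonempty := by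
  classical
  set n := Fintype.card (A × B) with hn
  set e : (A × B) ≃ Fin n := Fintype.equivFin (A × B) with he
  set q : A × B × Fin n → ℝ :=
    fun z => if z.2.2 = e (z.1, z.2.1) then m (z.1, z.2.1) else 0 with hq
  have hq0 : ∀ z, 0 ≤ q z := by
    intro z; rw [hq]; dsimp only; split_ifs
    · exact hm.1 _
    · exact le_refl 0
  have hmarg : ∀ a b, ∑ w, q (a, b, w) = m (a, b) := by
    intro a b; rw [hq]; simp
  have hWm : ∀ w : Fin n, ∑ a', ∑ b', q (a', b', w) = m (e.symm w) := by
    intro w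
    have h1 : (∑ a' : A, ∑ b' : B, q (a', b', w)) = ∑ z : A × B, q (z.1, z.2, w) :=
      (Fintype.sum_prod_type (fun z : A × B => q (z.1, z.2, w))).symm
    rw [h1, Finset.sum_eq_single (e.symm w)]
    · simp [hq]
    · intro z _ hz
      rw [hq]; dsimp only
      rw [if_neg]
      intro hcon
      apply hz
      apply_fun e.symm at hcon
      simp at hcon
      rw [hcon]
    · simp
  have hA : ∀ (a : A) (w : Fin n),
      ∑ b', q (a, b', w) = if (e.symm w).1 = a then m (e.symm w) else 0 := by
    intro a w
    split_ifs with h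
    · rw [Finset.sum_eq_single (e.symm w).2]
      · rw [hq]; dsimp only
        rw [← h, Prod.mk.eta, if_pos (by simp)]
      · intro b' _ hb'
        rw [hq]; dsimp only
        rw [if_neg]
        intro hcon
        apply hb'
        apply_fun e.symm at hcon
        simp at hcon
        rw [hcon]
      · simp
    · refine Finset.sum_eq_zero fun b' _ => ?_
      rw [hq]; dsimp only
      rw [if_neg]
      intro hcon
      apply h
      apply_fun e.symm at hcon
      simp at hcon
      rw [hcon]
  have hB : ∀ (b : B) (w : Fin n),
      ∑ a', q (a', b, w) = if (e.symm w).2 = b then m (e.symm w) else 0 := by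
    intro b w
    split_ifs with h
    · rw [Finset.sum_eq_single (e.symm w).1]
      · rw [hq]; dsimp only
        rw [← h, Prod.mk.eta, if_pos (by simp)]
      · intro a' _ ha'
        rw [hq]; dsimp only
        rw [if_neg]
        intro hcon
        apply ha'
        apply_fun e.symm at hcon
        simp at hcon
        rw [hcon]
      · simp
    · refine Finset.sum_eq_zero fun a' _ => ?_
      rw [hq]; dsimp only
      rw [if_neg]
      intro hcon
      apply h
      apply_fun e.symm at hcon
      simp at hcon
      rw [hcon]
  refine ⟨mutInfo (fun z : Fin n × (A × B) => q (z.2.1, z.2.2, z.1)), n, q, ⟨hq0, ?_⟩, hmarg, ?_, rfl⟩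
  · have h1 : ∑ z, q z = ∑ a, ∑ b, ∑ w, q (a, b, w) := by
      rw [Fintype.sum_prod_type]
      exact Finset.sum_congr rfl fun a _ => Fintype.sum_prod_type (fun z : B × Fin n => q (a, z))
    rw [h1]
    simp only [hmarg]
    rw [show (∑ a : A, ∑ b : B, m (a, b)) = ∑ z : A × B, m z from
      (Fintype.sum_prod_type m).symm]
    exact hm.2
  · intro a b w
    rw [hWm, hA, hB, hq]; dsimp only
    by_cases hcase : e.symm w = (a, b)
    · have h1 : (e.symm w).1 = a := by rw [hcase]
      have h2 : (e.symm w).2 = b := by rw [hcase]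
      rw [if_pos h1, if_pos h2, if_pos (by rw [← hcase]; simp), hcase]
    · have hfalse : ¬ (w = e (a, b)) := by
        intro hcon; apply hcase; apply_fun e.symm at hcon; simpa using hcon
      rw [if_neg hfalse, zero_mul]
      by_cases h1 : (e.symm w).1 = a
      · rw [if_neg (fun h2 => hcase (Prod.ext h1 h2)), mul_zero]
      · rw [if_neg h1, zero_mul]


/-- Wyner's common information is preserved under sufficient statistics. -/
theorem wyner_preserved
    [Fintype 𝒳] [Nonempty 𝒳] [Fintype 𝒴] [Nonempty 𝒴]
    [Fintype 𝒮] [Nonempty 𝒮] [Fintype 𝒯] [Nonempty 𝒯]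
    (p : 𝒳 × 𝒴 → ℝ) (hp : IsPMF p)
    (hX : ∀ x, 0 < margX p x) (hY : ∀ y, 0 < margY p y)
    (s : 𝒳 → 𝒮) (t : 𝒴 → 𝒯)
    (hs : SuffS p s) (ht : SuffT p t) :
    wynerCI p = wynerCI (margST p s t) := by
  classical
  have hS0 : ∀ x : 𝒳, 0 < margS p s (s x) := by
    intro x
    unfold margS
    refine lt_of_lt_of_le (hX x) ?_
    refine Finset.single_le_sum (f := fun x' => margX p x') (fun x' _ => (hX x').le) ?_
    simp
  have hT0 : ∀ y : 𝒴, 0 < margT p t (t y) := by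
    intro y
    unfold margT
    refine lt_of_lt_of_le (hY y) ?_
    refine Finset.single_le_sum (f := fun y' => margY p y') (fun y' _ => (hY y').le) ?_
    simp
  have hstruct : ∀ x y, p (x, y) * (margS p s (s x) * margT p t (t y))
      = margX p x * margY p y * margST p s t (s x, t y) := by
    intro x y
    have h1 : p (x, y) * margS p s (s x)
        = margX p x * ∑ x' ∈ Finset.univ.filter (fun x' => s x' = s x), p (x', y) := by
      unfold margS
      rw [Finset.mul_sum, Finset.mul_sum]
      refine Finset.sum_congr rfl fun x' hx' => ?_
      have h := hs x x' y ((Finset.mem_filter.1 hx').2).symm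
      linarith
    have h2 : ∀ x', p (x', y) * margT p t (t y)
        = margY p y * ∑ y' ∈ Finset.univ.filter (fun y' => t y' = t y), p (x', y') := by
      intro x'
      unfold margT
      rw [Finset.mul_sum, Finset.mul_sum]
      refine Finset.sum_congr rfl fun y' hy' => ?_
      have h := ht x' y y' ((Finset.mem_filter.1 hy').2).symm
      linarith
    calc p (x, y) * (margS p s (s x) * margT p t (t y))
        = (p (x, y) * margS p s (s x)) * margT p t (t y) := by ring
      _ = (margX p x * ∑ x' ∈ Finset.univ.filter (fun x' => s x' = s x), p (x', y))
            * margT p t (t y) := by rw [h1]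
      _ = margX p x * ∑ x' ∈ Finset.univ.filter (fun x' => s x' = s x),
            (p (x', y) * margT p t (t y)) := by rw [mul_assoc, Finset.sum_mul]
      _ = margX p x * ∑ x' ∈ Finset.univ.filter (fun x' => s x' = s x),
            (margY p y * ∑ y' ∈ Finset.univ.filter (fun y' => t y' = t y), p (x', y')) := by
            rw [Finset.sum_congr rfl fun x' _ => h2 x']
      _ = margX p x * margY p y * margST p s t (s x, t y) := by
            unfold margST
            rw [← Finset.mul_sum]
            ring
  set m : 𝒮 × 𝒯 → ℝ := margST p s t with hmdef
  have hm0 : ∀ z, 0 ≤ m z :=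
    fun z => Finset.sum_nonneg fun _ _ => Finset.sum_nonneg fun _ _ => hp.1 _
  have hmval : ∀ s0 t0, m (s0, t0) = ∑ x ∈ Finset.univ.filter (fun x => s x = s0),
      ∑ y ∈ Finset.univ.filter (fun y => t y = t0), p (x, y) := fun s0 t0 => rfl
  have hmsum : ∑ z : 𝒮 × 𝒯, m z = 1 := by
    rw [Fintype.sum_prod_type]
    have e2 : ∀ s0 : 𝒮, ∑ t0 : 𝒯, m (s0, t0)
        = ∑ x ∈ Finset.univ.filter (fun x => s x = s0), ∑ y : 𝒴, p (x, y) := by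
      intro s0
      simp only [hmval]
      rw [Finset.sum_comm]
      refine Finset.sum_congr rfl fun x _ => ?_
      exact Finset.sum_fiberwise Finset.univ t (fun y => p (x, y))
    rw [Finset.sum_congr rfl fun s0 _ => e2 s0]
    rw [Finset.sum_fiberwise Finset.univ s (fun x => ∑ y, p (x, y))]
    rw [show (∑ x, ∑ y, p (x, y)) = ∑ z, p z from (Fintype.sum_prod_type p).symm]
    exact hp.2
  have hmPMF : IsPMF m := ⟨hm0, hmsum⟩
  have hmzero : ∀ s0 t0, ((Finset.univ.filter (fun x => s x = s0)) = ∅ ∨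
      (Finset.univ.filter (fun y => t y = t0)) = ∅) → m (s0, t0) = 0 := by
    intro s0 t0 h
    rw [hmval]
    rcases h with h | h
    · rw [h, Finset.sum_empty]
    · rw [h]
      simp
  set αX : 𝒳 → ℝ := fun x => margX p x / margS p s (s x) with hαXdef
  set αY : 𝒴 → ℝ := fun y => margY p y / margT p t (t y) with hαYdef
  have hαX0 : ∀ x, 0 ≤ αX x := fun x => (div_pos (hX x) (hS0 x)).le
  have hαY0 : ∀ y, 0 ≤ αY y := fun y => (div_pos (hY y) (hT0 y)).le
  have hαXsum : ∀ s0 : 𝒮, (Finset.univ.filter (fun x => s x = s0)).Nonempty →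
      ∑ x' ∈ Finset.univ.filter (fun x' => s x' = s0), αX x' = 1 := by
    intro s0 hne
    obtain ⟨x0, hx0⟩ := hne
    have hx0' : s x0 = s0 := (Finset.mem_filter.1 hx0).2
    have hpos : 0 < margS p s s0 := hx0' ▸ hS0 x0
    have e1 : ∑ x' ∈ Finset.univ.filter (fun x' => s x' = s0), αX x'
        = (∑ x' ∈ Finset.univ.filter (fun x' => s x' = s0), margX p x') / margS p s s0 := by
      rw [Finset.sum_div]
      refine Finset.sum_congr rfl fun x' hx' => ?_
      rw [hαXdef]
      dsimp only
      rw [(Finset.mem_filter.1 hx').2]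
    rw [e1]
    rw [show (∑ x' ∈ Finset.univ.filter (fun x' => s x' = s0), margX p x')
        = margS p s s0 from rfl]
    exact div_self hpos.ne'
  have hαYsum : ∀ t0 : 𝒯, (Finset.univ.filter (fun y => t y = t0)).Nonempty →
      ∑ y' ∈ Finset.univ.filter (fun y' => t y' = t0), αY y' = 1 := by
    intro t0 hne
    obtain ⟨y0, hy0⟩ := hne
    have hy0' : t y0 = t0 := (Finset.mem_filter.1 hy0).2
    have hpos : 0 < margT p t t0 := hy0' ▸ hT0 y0
    have e1 : ∑ y' ∈ Finset.univ.filter (fun y' => t y' = t0), αY y'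
        = (∑ y' ∈ Finset.univ.filter (fun y' => t y' = t0), margY p y') / margT p t t0 := by
      rw [Finset.sum_div]
      refine Finset.sum_congr rfl fun y' hy' => ?_
      rw [hαYdef]
      dsimp only
      rw [(Finset.mem_filter.1 hy').2]
    rw [e1]
    rw [show (∑ y' ∈ Finset.univ.filter (fun y' => t y' = t0), margY p y')
        = margT p t t0 from rfl]
    exact div_self hpos.ne'
  have hkey : ∀ x y, p (x, y) = αX x * αY y * m (s x, t y) := by
    intro x y
    have h := hstruct x y
    rw [hαXdef, hαYdef]
    dsimp only
    rw [div_mul_div_comm, div_mul_eq_mul_div, eq_div_iff (mul_pos (hS0 x) (hT0 y)).ne']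
    linarith
  have hprodfilter : ∀ (s0 : 𝒮) (t0 : 𝒯),
      Finset.univ.filter (fun z : 𝒳 × 𝒴 => (s z.1, t z.2) = (s0, t0))
      = (Finset.univ.filter (fun x => s x = s0)) ×ˢ (Finset.univ.filter (fun y => t y = t0)) := by
    intro s0 t0
    ext z
    simp [Prod.ext_iff]
  unfold wynerCI
  have hbddA : BddBelow { c | ∃ (n : ℕ) (q : 𝒳 × 𝒴 × Fin n → ℝ),
      IsPMF q ∧
      (∀ a b, ∑ w, q (a, b, w) = p (a, b)) ∧
      (∀ a b w, q (a, b, w) * (∑ a', ∑ b', q (a', b', w)) =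
        (∑ b', q (a, b', w)) * (∑ a', q (a', b, w))) ∧
      c = mutInfo (fun z : Fin n × (𝒳 × 𝒴) => q (z.2.1, z.2.2, z.1)) } := by
    refine ⟨0, fun c hc => ?_⟩
    obtain ⟨n, q, hqPMF, _, _, rfl⟩ := hc
    refine mutInfo_nonneg _ (fun z => hqPMF.1 _) ?_
    rw [sum_reindex q]
    exact hqPMF.2
  have hbddB : BddBelow { c | ∃ (n : ℕ) (q : 𝒮 × 𝒯 × Fin n → ℝ),
      IsPMF q ∧
      (∀ a b, ∑ w, q (a, b, w) = m (a, b)) ∧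
      (∀ a b w, q (a, b, w) * (∑ a', ∑ b', q (a', b', w)) =
        (∑ b', q (a, b', w)) * (∑ a', q (a', b, w))) ∧
      c = mutInfo (fun z : Fin n × (𝒮 × 𝒯) => q (z.2.1, z.2.2, z.1)) } := by
    refine ⟨0, fun c hc => ?_⟩
    obtain ⟨n, q, hqPMF, _, _, rfl⟩ := hc
    refine mutInfo_nonneg _ (fun z => hqPMF.1 _) ?_
    rw [sum_reindex q]
    exact hqPMF.2
  apply le_antisymm
  · -- every ST-coupling lifts to an XY-coupling with the same mutual information
    refine csInf_le_csInf hbddA (wyner_nonempty m hmPMF) ?_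
    rintro c ⟨n, q, hqPMF, hqm, hqCI, rfl⟩
    have hqzero : ∀ s0 t0 w, m (s0, t0) = 0 → q (s0, t0, w) = 0 := by
      intro s0 t0 w h
      have h1 : ∑ w', q (s0, t0, w') = 0 := by rw [hqm s0 t0, h]
      exact (Finset.sum_eq_zero_iff_of_nonneg (fun w' _ => hqPMF.1 _)).1 h1 w (Finset.mem_univ w)
    set q' : 𝒳 × 𝒴 × Fin n → ℝ :=
      fun z => αX z.1 * αY z.2.1 * q (s z.1, t z.2.1, z.2.2) with hq'def
    have hq'0 : ∀ z, 0 ≤ q' z :=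
      fun z => mul_nonneg (mul_nonneg (hαX0 _) (hαY0 _)) (hqPMF.1 _)
    have hq'marg : ∀ x y, ∑ w, q' (x, y, w) = p (x, y) := by
      intro x y
      rw [hq'def]
      dsimp only
      rw [← Finset.mul_sum, hqm (s x) (t y), ← hkey x y]
    have hinnerY : ∀ (s0 : 𝒮) (w : Fin n),
        ∑ y', αY y' * q (s0, t y', w) = ∑ t0, q (s0, t0, w) := by
      intro s0 w
      rw [← Finset.sum_fiberwise Finset.univ t (fun y' => αY y' * q (s0, t y', w))]
      refine Finset.sum_congr rfl fun t0 _ => ?_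
      have hcongr : (∑ y' ∈ Finset.univ.filter (fun y' => t y' = t0), αY y' * q (s0, t y', w))
          = ∑ y' ∈ Finset.univ.filter (fun y' => t y' = t0), αY y' * q (s0, t0, w) :=
        Finset.sum_congr rfl fun y' hy' => by rw [(Finset.mem_filter.1 hy').2]
      rw [hcongr]
      rcases (Finset.univ.filter (fun y' => t y' = t0)).eq_empty_or_nonempty with he | hne
      · rw [he, Finset.sum_empty, hqzero s0 t0 w (hmzero s0 t0 (Or.inr he))]
      · rw [← Finset.sum_mul, hαYsum t0 hne, one_mul]
    have hinnerX : ∀ (t0 : 𝒯) (w : Fin n),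
        ∑ x', αX x' * q (s x', t0, w) = ∑ s0, q (s0, t0, w) := by
      intro t0 w
      rw [← Finset.sum_fiberwise Finset.univ s (fun x' => αX x' * q (s x', t0, w))]
      refine Finset.sum_congr rfl fun s0 _ => ?_
      have hcongr : (∑ x' ∈ Finset.univ.filter (fun x' => s x' = s0), αX x' * q (s x', t0, w))
          = ∑ x' ∈ Finset.univ.filter (fun x' => s x' = s0), αX x' * q (s0, t0, w) :=
        Finset.sum_congr rfl fun x' hx' => by rw [(Finset.mem_filter.1 hx').2]
      rw [hcongr]
      rcases (Finset.univ.filter (fun x' => s x' = s0)).eq_empty_or_nonempty with he | hne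
      · rw [he, Finset.sum_empty, hqzero s0 t0 w (hmzero s0 t0 (Or.inl he))]
      · rw [← Finset.sum_mul, hαXsum s0 hne, one_mul]
    refine ⟨n, q', ⟨hq'0, ?_⟩, hq'marg, ?_, ?_⟩
    · have h1 : ∑ z, q' z = ∑ x, ∑ y, ∑ w, q' (x, y, w) := by
        rw [Fintype.sum_prod_type]
        exact Finset.sum_congr rfl fun x _ =>
          Fintype.sum_prod_type (fun z : 𝒴 × Fin n => q' (x, z))
      rw [h1]
      simp only [hq'marg]
      rw [show (∑ x, ∑ y, p (x, y)) = ∑ z, p z from (Fintype.sum_prod_type p).symm]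
      exact hp.2
    · intro x y w
      have hterm1 : ∀ a' : 𝒳, ∑ b' : 𝒴, q' (a', b', w) = αX a' * ∑ t0, q (s a', t0, w) := by
        intro a'
        rw [hq'def]
        dsimp only
        have e : ∀ b', αX a' * αY b' * q (s a', t b', w)
            = αX a' * (αY b' * q (s a', t b', w)) := fun b' => by ring
        rw [Finset.sum_congr rfl fun b' _ => e b', ← Finset.mul_sum, hinnerY (s a') w]
      have hterm2 : (∑ a' : 𝒳, q' (a', y, w)) = αY y * ∑ s0, q (s0, t y, w) := by
        rw [hq'def]
        dsimp only
        have e : ∀ a', αX a' * αY y * q (s a', t y, w)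
            = αY y * (αX a' * q (s a', t y, w)) := fun a' => by ring
        rw [Finset.sum_congr rfl fun a' _ => e a', ← Finset.mul_sum, hinnerX (t y) w]
      have hW : (∑ a' : 𝒳, ∑ b' : 𝒴, q' (a', b', w)) = ∑ s0, ∑ t0, q (s0, t0, w) := by
        rw [Finset.sum_congr rfl fun a' _ => hterm1 a']
        rw [← Finset.sum_fiberwise Finset.univ s (fun a' => αX a' * ∑ t0, q (s a', t0, w))]
        refine Finset.sum_congr rfl fun s0 _ => ?_
        have hcongr : (∑ x' ∈ Finset.univ.filter (fun x' => s x' = s0),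
              αX x' * ∑ t0, q (s x', t0, w))
            = ∑ x' ∈ Finset.univ.filter (fun x' => s x' = s0),
              αX x' * ∑ t0, q (s0, t0, w) :=
          Finset.sum_congr rfl fun x' hx' => by rw [(Finset.mem_filter.1 hx').2]
        rw [hcongr]
        rcases (Finset.univ.filter (fun x' => s x' = s0)).eq_empty_or_nonempty with he | hne
        · rw [he, Finset.sum_empty]
          exact (Finset.sum_eq_zero fun t0 _ =>
            hqzero s0 t0 w (hmzero s0 t0 (Or.inl he))).symm
        · rw [← Finset.sum_mul, hαXsum s0 hne, one_mul]
      rw [hW, hterm1 x, hterm2]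
      rw [hq'def]
      dsimp only
      linear_combination (αX x * αY y) * hqCI (s x) (t y) w
    · -- value preserved: mutInfo_lift
      have hsumlift : ∀ c : 𝒮 × 𝒯,
          (∑ a ∈ Finset.univ.filter
              (fun a : 𝒳 × 𝒴 => (s a.1, t a.2) = c), αX a.1 * αY a.2 = 1) ∨
          (∀ w : Fin n, q (c.1, c.2, w) = 0) := by
        rintro ⟨s0, t0⟩
        rcases (Finset.univ.filter (fun x => s x = s0)).eq_empty_or_nonempty with he | hneX
        · exact Or.inr fun w => hqzero s0 t0 w (hmzero s0 t0 (Or.inl he))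
        rcases (Finset.univ.filter (fun y => t y = t0)).eq_empty_or_nonempty with he | hneY
        · exact Or.inr fun w => hqzero s0 t0 w (hmzero s0 t0 (Or.inr he))
        left
        rw [hprodfilter s0 t0, Finset.sum_product, ← Finset.sum_mul_sum,
          hαXsum s0 hneX, hαYsum t0 hneY, one_mul]
      refine (mutInfo_lift (fun zc : Fin n × (𝒮 × 𝒯) => q (zc.2.1, zc.2.2, zc.1))
        (fun zc => hqPMF.1 _) (fun a : 𝒳 × 𝒴 => (s a.1, t a.2))
        (fun a : 𝒳 × 𝒴 => αX a.1 * αY a.2)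
        (fun a => mul_nonneg (hαX0 _) (hαY0 _)) ?_).symm
      intro c
      rcases hsumlift c with h | h
      · left
        rw [Finset.filter_congr_decidable]
        show (∑ a ∈ Finset.univ.filter
          (fun a : 𝒳 × 𝒴 => (s a.1, t a.2) = c), αX a.1 * αY a.2) = 1
        exact h
      · exact Or.inr fun w => h w
  · -- pushforward direction
    refine le_csInf (wyner_nonempty p hp) ?_
    rintro c ⟨n, q, hqPMF, hqm, hqCI, rfl⟩
    set qt : 𝒮 × 𝒯 × Fin n → ℝ := fun z =>
      ∑ x ∈ Finset.univ.filter (fun x => s x = z.1),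
        ∑ y ∈ Finset.univ.filter (fun y => t y = z.2.1), q (x, y, z.2.2) with hqtdef
    have hqt0 : ∀ z, 0 ≤ qt z :=
      fun z => Finset.sum_nonneg fun _ _ => Finset.sum_nonneg fun _ _ => hqPMF.1 _
    have hqtmarg : ∀ s0 t0, ∑ w, qt (s0, t0, w) = m (s0, t0) := by
      intro s0 t0
      rw [hqtdef]
      dsimp only
      rw [Finset.sum_comm' (t' := Finset.univ.filter (fun x => s x = s0)) (s' := fun _ => Finset.univ) (fun _ _ => by simp), hmval]
      refine Finset.sum_congr rfl fun x _ => ?_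
      rw [Finset.sum_comm' (t' := Finset.univ.filter (fun y => t y = t0)) (s' := fun _ => Finset.univ) (fun _ _ => by simp)]
      exact Finset.sum_congr rfl fun y _ => hqm x y
    have hsum1 : ∑ z, qt z = 1 := by
      have h1 : ∑ z, qt z = ∑ s0, ∑ t0, ∑ w, qt (s0, t0, w) := by
        rw [Fintype.sum_prod_type]
        exact Finset.sum_congr rfl fun s0 _ =>
          Fintype.sum_prod_type (fun z : 𝒯 × Fin n => qt (s0, z))
      rw [h1]
      simp only [hqtmarg]
      rw [show (∑ s0, ∑ t0, m (s0, t0)) = ∑ z, m z from (Fintype.sum_prod_type m).symm]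
      exact hmsum
    have hSWt : ∀ s0 w, (∑ t0, qt (s0, t0, w))
        = ∑ x ∈ Finset.univ.filter (fun x => s x = s0), ∑ y, q (x, y, w) := by
      intro s0 w
      rw [hqtdef]
      dsimp only
      rw [Finset.sum_comm' (t' := Finset.univ.filter (fun x => s x = s0)) (s' := fun _ => Finset.univ) (fun _ _ => by simp)]
      exact Finset.sum_congr rfl fun x _ =>
        Finset.sum_fiberwise Finset.univ t (fun y => q (x, y, w))
    have hTWt : ∀ t0 w, (∑ s0, qt (s0, t0, w))
        = ∑ y ∈ Finset.univ.filter (fun y => t y = t0), ∑ x, q (x, y, w) := by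
      intro t0 w
      rw [hqtdef]
      dsimp only
      rw [Finset.sum_fiberwise Finset.univ s
        (fun x => ∑ y ∈ Finset.univ.filter (fun y => t y = t0), q (x, y, w))]
      exact Finset.sum_comm
    have hWt : ∀ w, (∑ s0, ∑ t0, qt (s0, t0, w)) = ∑ a, ∑ b, q (a, b, w) := by
      intro w
      rw [Finset.sum_congr rfl fun s0 _ => hSWt s0 w]
      exact Finset.sum_fiberwise Finset.univ s (fun x => ∑ y, q (x, y, w))
    have hCIt : ∀ s0 t0 w, qt (s0, t0, w) * (∑ s', ∑ t', qt (s', t', w))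
        = (∑ t', qt (s0, t', w)) * (∑ s', qt (s', t0, w)) := by
      intro s0 t0 w
      rw [hWt w, hSWt s0 w, hTWt t0 w]
      rw [show qt (s0, t0, w) = ∑ x ∈ Finset.univ.filter (fun x => s x = s0),
        ∑ y ∈ Finset.univ.filter (fun y => t y = t0), q (x, y, w) from rfl]
      rw [Finset.sum_mul, Finset.sum_mul_sum]
      refine Finset.sum_congr rfl fun x _ => ?_
      rw [Finset.sum_mul]
      refine Finset.sum_congr rfl fun y _ => ?_
      exact hqCI x y w
    have hmem : mutInfo (fun z : Fin n × (𝒮 × 𝒯) => qt (z.2.1, z.2.2, z.1)) ∈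
        { c | ∃ (n : ℕ) (q : 𝒮 × 𝒯 × Fin n → ℝ),
          IsPMF q ∧
          (∀ a b, ∑ w, q (a, b, w) = m (a, b)) ∧
          (∀ a b w, q (a, b, w) * (∑ a', ∑ b', q (a', b', w)) =
            (∑ b', q (a, b', w)) * (∑ a', q (a', b, w))) ∧
          c = mutInfo (fun z : Fin n × (𝒮 × 𝒯) => q (z.2.1, z.2.2, z.1)) } :=
      ⟨n, qt, ⟨hqt0, hsum1⟩, hqtmarg, hCIt, rfl⟩
    refine le_trans (csInf_le hbddB hmem) ?_
    refine mutInfo_dpi' (fun z : Fin n × (𝒳 × 𝒴) => q (z.2.1, z.2.2, z.1))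
      (fun z => hqPMF.1 _) (fun a : 𝒳 × 𝒴 => (s a.1, t a.2))
      (fun z : Fin n × (𝒮 × 𝒯) => qt (z.2.1, z.2.2, z.1)) ?_
    rintro w ⟨s0, t0⟩
    rw [Finset.filter_congr_decidable]
    show qt (s0, t0, w) = ∑ a ∈ Finset.univ.filter
      (fun a : 𝒳 × 𝒴 => (s a.1, t a.2) = (s0, t0)), q (a.1, a.2, w)
    rw [show qt (s0, t0, w) = ∑ x ∈ Finset.univ.filter (fun x => s x = s0),
      ∑ y ∈ Finset.univ.filter (fun y => t y = t0), q (x, y, w) from rfl]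
    rw [hprodfilter s0 t0, Finset.sum_product]

end
end

section
/- Suppose s : 𝒳 → 𝒮 and t : 𝒴 → 𝒯 are both sufficient. Then C_W(p) equals the infimum, over all n ∈ ℕ and joint pmfs q on 𝒳 × 𝒴 × Fin n whose (𝒳,𝒴)-marginal is p and which satisfy both (i) W−(S,T)−(X,Y): q(x,y,w)·pST(s(x),t(y)) = p(x,y)·qSTW(s(x),t(y),w) for all x,y,w, where qSTW(s0,t0,w) = ∑_{x : s(x)=s0, y : t(y)=t0} q(x,y,w), and (ii) the chain X−S−W−T−Y: q(x,y,w)·pS(s(x))·pT(t(y))·qW(w) = pX(x)·pY(y)·qSW(s(x),w)·qTW(t(y),w) for all x,y,w (with qW, qSW, qTW the corresponding marginals), of the mutual information I_q(W;(S,T)) computed from the joint distribution of ((s(x),t(y)), w). -/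
open Finset

noncomputable section
open scoped Classical

variable {𝒳 𝒴 𝒮 𝒯 : Type*}

/-- Joint distribution of `(S, T, W) = (s(X), t(Y), W)` induced by a joint pmf `q`
on `𝒳 × 𝒴 × 𝒲`. -/
def margSTW {𝒲 : Type*} [Fintype 𝒳] [Fintype 𝒴] [Fintype 𝒲]
    (q : 𝒳 × 𝒴 × 𝒲 → ℝ) (s : 𝒳 → 𝒮) (t : 𝒴 → 𝒯) (s0 : 𝒮) (t0 : 𝒯) (w : 𝒲) : ℝ :=
  ∑ x ∈ Finset.univ.filter (fun x => s x = s0),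
    ∑ y ∈ Finset.univ.filter (fun y => t y = t0), q (x, y, w)


/-! ### Auxiliary lemmas -/

/-- Gibbs-type inequality. -/
lemma gibbs_aux {ι : Type*} (S : Finset ι) (a b : ι → ℝ)
    (ha : ∀ i ∈ S, 0 < a i) (hb : ∀ i ∈ S, 0 < b i) :
    (∑ i ∈ S, a i) - (∑ i ∈ S, b i) ≤ ∑ i ∈ S, a i * Real.log (a i / b i) := by
  rw [← Finset.sum_sub_distrib]
  refine Finset.sum_le_sum fun i hi => ?_
  have ha' := ha i hi; have hb' := hb i hi
  have h1 : Real.log (b i / a i) ≤ b i / a i - 1 := Real.log_le_sub_one_of_pos (by positivity)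
  have h2 : Real.log (a i / b i) = - Real.log (b i / a i) := by
    rw [← Real.log_inv]; congr 1; field_simp
  have h3 : a i * Real.log (b i / a i) ≤ a i * (b i / a i - 1) :=
    mul_le_mul_of_nonneg_left h1 ha'.le
  have h4 : a i * (b i / a i - 1) = b i - a i := by field_simp
  rw [h2]; nlinarith

section StructuralLemmas

variable [Fintype 𝒳] [Fintype 𝒴] [Fintype 𝒮] [Fintype 𝒯]

lemma swap_lemma (p : 𝒳 × 𝒴 → ℝ) (s : 𝒳 → 𝒮) (t : 𝒴 → 𝒯)
    (hs : SuffS p s) (ht : SuffT p t) {x x' : 𝒳} {y y' : 𝒴}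
    (hx : s x = s x') (hy : t y = t y') :
    p (x, y) * (margX p x' * margY p y') = p (x', y') * (margX p x * margY p y) := by
  have h1 := hs x x' y hx
  have h2 := ht x' y y' hy
  linear_combination margY p y' * h1 + margX p x * h2

lemma key_identity (p : 𝒳 × 𝒴 → ℝ) (s : 𝒳 → 𝒮) (t : 𝒴 → 𝒯)
    (hs : SuffS p s) (ht : SuffT p t) (x : 𝒳) (y : 𝒴) :
    p (x, y) * margS p s (s x) * margT p t (t y)
      = margX p x * margY p y * margST p s t (s x, t y) := by
  unfold margS margT margST
  simp only [Finset.mul_sum, Finset.sum_mul]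
  rw [Finset.sum_comm]
  refine Finset.sum_congr rfl fun x' hx' => Finset.sum_congr rfl fun y' hy' => ?_
  have hx'' : s x' = s x := by simpa using (Finset.mem_filter.mp hx').2
  have hy'' : t y' = t y := by simpa using (Finset.mem_filter.mp hy').2
  linear_combination swap_lemma p s t hs ht hx''.symm hy''.symm

lemma sum_fiber_pair (s : 𝒳 → 𝒮) (t : 𝒴 → 𝒯) (f : 𝒳 → 𝒴 → ℝ) :
    ∑ s0 : 𝒮, ∑ t0 : 𝒯, ∑ x ∈ Finset.univ.filter (fun x => s x = s0),
      ∑ y ∈ Finset.univ.filter (fun y => t y = t0), f x y = ∑ x, ∑ y, f x y := by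
  have h2 : ∀ s0 : 𝒮, ∑ t0 : 𝒯, ∑ x ∈ Finset.univ.filter (fun x => s x = s0),
      ∑ y ∈ Finset.univ.filter (fun y => t y = t0), f x y
      = ∑ x ∈ Finset.univ.filter (fun x => s x = s0), ∑ y, f x y := by
    intro s0
    rw [Finset.sum_comm]
    exact Finset.sum_congr rfl fun x _ => Finset.sum_fiberwise _ _ _
  rw [Finset.sum_congr rfl fun s0 _ => h2 s0]
  exact Finset.sum_fiberwise _ _ _

variable {n : ℕ}

lemma margSTW_nonneg (q : 𝒳 × 𝒴 × Fin n → ℝ) (hq0 : ∀ z, 0 ≤ q z)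
    (s : 𝒳 → 𝒮) (t : 𝒴 → 𝒯) (s0 : 𝒮) (t0 : 𝒯) (w : Fin n) :
    0 ≤ margSTW q s t s0 t0 w :=
  Finset.sum_nonneg fun _ _ => Finset.sum_nonneg fun _ _ => hq0 _

lemma le_margSTW (q : 𝒳 × 𝒴 × Fin n → ℝ) (hq0 : ∀ z, 0 ≤ q z)
    (s : 𝒳 → 𝒮) (t : 𝒴 → 𝒯) (x : 𝒳) (y : 𝒴) (w : Fin n) :
    q (x, y, w) ≤ margSTW q s t (s x) (t y) w := by
  unfold margSTW
  have hx : x ∈ Finset.univ.filter (fun x' => s x' = s x) :=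
    Finset.mem_filter.mpr ⟨Finset.mem_univ _, rfl⟩
  have hy : y ∈ Finset.univ.filter (fun y' => t y' = t y) :=
    Finset.mem_filter.mpr ⟨Finset.mem_univ _, rfl⟩
  calc q (x, y, w) ≤ ∑ y' ∈ Finset.univ.filter (fun y' => t y' = t y), q (x, y', w) :=
        Finset.single_le_sum (f := fun y' => q (x, y', w)) (fun i _ => hq0 _) hy
    _ ≤ _ := Finset.single_le_sum
        (f := fun x' => ∑ y' ∈ Finset.univ.filter (fun y' => t y' = t y), q (x', y', w))
        (fun i _ => Finset.sum_nonneg fun _ _ => hq0 _) hx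

lemma le_margST (p : 𝒳 × 𝒴 → ℝ) (hp0 : ∀ z, 0 ≤ p z)
    (s : 𝒳 → 𝒮) (t : 𝒴 → 𝒯) (x : 𝒳) (y : 𝒴) :
    p (x, y) ≤ margST p s t (s x, t y) := by
  unfold margST
  have hx : x ∈ Finset.univ.filter (fun x' => s x' = s x) :=
    Finset.mem_filter.mpr ⟨Finset.mem_univ _, rfl⟩
  have hy : y ∈ Finset.univ.filter (fun y' => t y' = t y) :=
    Finset.mem_filter.mpr ⟨Finset.mem_univ _, rfl⟩
  calc p (x, y) ≤ ∑ y' ∈ Finset.univ.filter (fun y' => t y' = t y), p (x, y') :=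
        Finset.single_le_sum (f := fun y' => p (x, y')) (fun i _ => hp0 _) hy
    _ ≤ _ := Finset.single_le_sum
        (f := fun x' => ∑ y' ∈ Finset.univ.filter (fun y' => t y' = t y), p (x', y'))
        (fun i _ => Finset.sum_nonneg fun _ _ => hp0 _) hx

lemma margX_le_margS (p : 𝒳 × 𝒴 → ℝ) (hp0 : ∀ z, 0 ≤ p z) (s : 𝒳 → 𝒮) (x : 𝒳) :
    margX p x ≤ margS p s (s x) := by
  unfold margS
  exact Finset.single_le_sum (f := fun x' => margX p x')
    (fun i _ => Finset.sum_nonneg fun _ _ => hp0 _)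
    (Finset.mem_filter.mpr ⟨Finset.mem_univ _, rfl⟩)

lemma margY_le_margT (p : 𝒳 × 𝒴 → ℝ) (hp0 : ∀ z, 0 ≤ p z) (t : 𝒴 → 𝒯) (y : 𝒴) :
    margY p y ≤ margT p t (t y) := by
  unfold margT
  exact Finset.single_le_sum (f := fun y' => margY p y')
    (fun i _ => Finset.sum_nonneg fun _ _ => hp0 _)
    (Finset.mem_filter.mpr ⟨Finset.mem_univ _, rfl⟩)

lemma sum_w_margSTW (p : 𝒳 × 𝒴 → ℝ) (q : 𝒳 × 𝒴 × Fin n → ℝ)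
    (s : 𝒳 → 𝒮) (t : 𝒴 → 𝒯)
    (hmarg : ∀ x y, ∑ w, q (x, y, w) = p (x, y)) (s0 : 𝒮) (t0 : 𝒯) :
    ∑ w, margSTW q s t s0 t0 w = margST p s t (s0, t0) := by
  unfold margSTW margST
  rw [Finset.sum_comm]
  refine Finset.sum_congr rfl fun x _ => ?_
  rw [Finset.sum_comm]
  exact Finset.sum_congr rfl fun y _ => hmarg x y

lemma sum_st_margSTW (q : 𝒳 × 𝒴 × Fin n → ℝ) (s : 𝒳 → 𝒮) (t : 𝒴 → 𝒯) (w : Fin n) :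
    ∑ s0, ∑ t0, margSTW q s t s0 t0 w = ∑ x, ∑ y, q (x, y, w) := by
  unfold margSTW
  exact sum_fiber_pair s t _

lemma sum_t_margSTW (q : 𝒳 × 𝒴 × Fin n → ℝ) (s : 𝒳 → 𝒮) (t : 𝒴 → 𝒯)
    (s0 : 𝒮) (w : Fin n) :
    ∑ t0, margSTW q s t s0 t0 w
      = ∑ x ∈ Finset.univ.filter (fun x => s x = s0), ∑ y, q (x, y, w) := by
  unfold margSTW
  rw [Finset.sum_comm]
  exact Finset.sum_congr rfl fun x _ => Finset.sum_fiberwise _ _ _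

lemma sum_s_margSTW (q : 𝒳 × 𝒴 × Fin n → ℝ) (s : 𝒳 → 𝒮) (t : 𝒴 → 𝒯)
    (t0 : 𝒯) (w : Fin n) :
    ∑ s0, margSTW q s t s0 t0 w
      = ∑ y ∈ Finset.univ.filter (fun y => t y = t0), ∑ x, q (x, y, w) := by
  unfold margSTW
  have h1 : ∀ s0 : 𝒮, ∑ x ∈ Finset.univ.filter (fun x => s x = s0),
      ∑ y ∈ Finset.univ.filter (fun y => t y = t0), q (x, y, w)
      = ∑ y ∈ Finset.univ.filter (fun y => t y = t0),
        ∑ x ∈ Finset.univ.filter (fun x => s x = s0), q (x, y, w) :=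
    fun s0 => Finset.sum_comm
  rw [Finset.sum_congr rfl fun s0 _ => h1 s0, Finset.sum_comm]
  exact Finset.sum_congr rfl fun y _ => Finset.sum_fiberwise _ _ _

lemma regroup (q : 𝒳 × 𝒴 × Fin n → ℝ) (hq0 : ∀ z, 0 ≤ q z)
    (s : 𝒳 → 𝒮) (t : 𝒴 → 𝒯) (L : 𝒮 → 𝒯 → Fin n → ℝ) :
    ∑ x, ∑ y, ∑ w, (if 0 < q (x, y, w) then q (x, y, w) * L (s x) (t y) w else 0)
    = ∑ s0, ∑ t0, ∑ w, (if 0 < margSTW q s t s0 t0 w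
        then margSTW q s t s0 t0 w * L s0 t0 w else 0) := by
  have step1 : ∀ (s0 : 𝒮) (t0 : 𝒯) (w : Fin n),
      (if 0 < margSTW q s t s0 t0 w then margSTW q s t s0 t0 w * L s0 t0 w else 0)
      = ∑ x ∈ Finset.univ.filter (fun x => s x = s0),
          ∑ y ∈ Finset.univ.filter (fun y => t y = t0),
            (if 0 < q (x, y, w) then q (x, y, w) * L (s x) (t y) w else 0) := by
    intro s0 t0 w
    have hcongr : ∑ x ∈ Finset.univ.filter (fun x => s x = s0),
          ∑ y ∈ Finset.univ.filter (fun y => t y = t0),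
            (if 0 < q (x, y, w) then q (x, y, w) * L (s x) (t y) w else 0)
        = ∑ x ∈ Finset.univ.filter (fun x => s x = s0),
          ∑ y ∈ Finset.univ.filter (fun y => t y = t0),
            (if 0 < q (x, y, w) then q (x, y, w) * L s0 t0 w else 0) := by
      refine Finset.sum_congr rfl fun x hx => Finset.sum_congr rfl fun y hy => ?_
      have hx' : s x = s0 := by simpa using (Finset.mem_filter.mp hx).2
      have hy' : t y = t0 := by simpa using (Finset.mem_filter.mp hy).2
      rw [hx', hy']
    rw [hcongr]
    by_cases hM : 0 < margSTW q s t s0 t0 w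
    · rw [if_pos hM]
      have h1 : margSTW q s t s0 t0 w * L s0 t0 w
          = ∑ x ∈ Finset.univ.filter (fun x => s x = s0),
            ∑ y ∈ Finset.univ.filter (fun y => t y = t0), q (x, y, w) * L s0 t0 w := by
        unfold margSTW
        rw [Finset.sum_mul]
        exact Finset.sum_congr rfl fun x _ => Finset.sum_mul ..
      rw [h1]
      refine Finset.sum_congr rfl fun x _ => Finset.sum_congr rfl fun y _ => ?_
      by_cases hq : 0 < q (x, y, w)
      · rw [if_pos hq]
      · rw [if_neg hq]
        have : q (x, y, w) = 0 := le_antisymm (not_lt.mp hq) (hq0 _)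
        rw [this, zero_mul]
    · rw [if_neg hM]
      have hMz : margSTW q s t s0 t0 w = 0 :=
        le_antisymm (not_lt.mp hM) (margSTW_nonneg q hq0 s t s0 t0 w)
      symm
      refine Finset.sum_eq_zero fun x hx => Finset.sum_eq_zero fun y hy => ?_
      have hqz : q (x, y, w) = 0 := by
        have h1 : ∑ x ∈ Finset.univ.filter (fun x => s x = s0),
            ∑ y ∈ Finset.univ.filter (fun y => t y = t0), q (x, y, w) = 0 := hMz
        have h2 := (Finset.sum_eq_zero_iff_of_nonneg
          (fun i _ => Finset.sum_nonneg fun j _ => hq0 _)).mp h1 x hx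
        exact (Finset.sum_eq_zero_iff_of_nonneg (fun j _ => hq0 _)).mp h2 y hy
      rw [if_neg (by rw [hqz]; exact lt_irrefl 0)]
  calc ∑ x, ∑ y, ∑ w, (if 0 < q (x, y, w) then q (x, y, w) * L (s x) (t y) w else 0)
      = ∑ s0, ∑ t0, ∑ x ∈ Finset.univ.filter (fun x => s x = s0),
          ∑ y ∈ Finset.univ.filter (fun y => t y = t0),
            ∑ w, (if 0 < q (x, y, w) then q (x, y, w) * L (s x) (t y) w else 0) :=
        (sum_fiber_pair s t _).symm
    _ = ∑ s0, ∑ t0, ∑ w, ∑ x ∈ Finset.univ.filter (fun x => s x = s0),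
          ∑ y ∈ Finset.univ.filter (fun y => t y = t0),
            (if 0 < q (x, y, w) then q (x, y, w) * L (s x) (t y) w else 0) := by
        refine Finset.sum_congr rfl fun s0 _ => Finset.sum_congr rfl fun t0 _ => ?_
        exact (Finset.sum_congr rfl fun x _ => Finset.sum_comm).trans Finset.sum_comm
    _ = _ := by
        refine Finset.sum_congr rfl fun s0 _ => Finset.sum_congr rfl fun t0 _ =>
          Finset.sum_congr rfl fun w _ => ?_
        rw [step1 s0 t0 w]

end StructuralLemmas


section CostLemmas

variable [Fintype 𝒳] [Fintype 𝒴] [Fintype 𝒮] [Fintype 𝒯] {n : ℕ}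

lemma sum_prod_rotate {α β γ : Type*} [Fintype α] [Fintype β] [Fintype γ]
    (H : γ → α → β → ℝ) :
    ∑ z : γ × α × β, H z.1 z.2.1 z.2.2 = ∑ x : α, ∑ y : β, ∑ w : γ, H w x y := by
  rw [Fintype.sum_prod_type]
  have h1 : ∀ w : γ, ∑ ab : α × β, H w ab.1 ab.2 = ∑ x, ∑ y, H w x y :=
    fun w => Fintype.sum_prod_type _
  rw [Finset.sum_congr rfl fun w _ => h1 w]
  exact Finset.sum_comm.trans (Finset.sum_congr rfl fun x _ => Finset.sum_comm)

lemma sum_prodl_rotate {α β γ : Type*} [Fintype α] [Fintype β] [Fintype γ]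
    (H : α → β → γ → ℝ) :
    ∑ z : (α × β) × γ, H z.1.1 z.1.2 z.2 = ∑ x : α, ∑ y : β, ∑ w : γ, H x y w := by
  rw [Fintype.sum_prod_type]
  have h1 : ∀ ab : α × β, ∑ w : γ, H ab.1 ab.2 w = (fun a b => ∑ w : γ, H a b w) ab.1 ab.2 :=
    fun ab => rfl
  rw [Finset.sum_congr rfl fun ab _ => h1 ab]
  exact Fintype.sum_prod_type _

lemma sum_triple {α β γ : Type*} [Fintype α] [Fintype β] [Fintype γ]
    (H : α → β → γ → ℝ) :
    ∑ z : α × β × γ, H z.1 z.2.1 z.2.2 = ∑ x : α, ∑ y : β, ∑ w : γ, H x y w := by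
  rw [Fintype.sum_prod_type]
  exact Finset.sum_congr rfl fun x _ => Fintype.sum_prod_type _

lemma q_le_qW (q : 𝒳 × 𝒴 × Fin n → ℝ) (hq0 : ∀ z, 0 ≤ q z) (x : 𝒳) (y : 𝒴) (w : Fin n) :
    q (x, y, w) ≤ ∑ x', ∑ y', q (x', y', w) := by
  calc q (x, y, w) ≤ ∑ y', q (x, y', w) :=
        Finset.single_le_sum (f := fun y' => q (x, y', w)) (fun i _ => hq0 _)
          (Finset.mem_univ y)
    _ ≤ _ := Finset.single_le_sum (f := fun x' => ∑ y', q (x', y', w))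
          (fun i _ => Finset.sum_nonneg fun _ _ => hq0 _) (Finset.mem_univ x)

lemma costA_eq (p : 𝒳 × 𝒴 → ℝ) (q : 𝒳 × 𝒴 × Fin n → ℝ)
    (hmarg : ∀ x y, ∑ w, q (x, y, w) = p (x, y)) :
    mutInfo (fun z : Fin n × (𝒳 × 𝒴) => q (z.2.1, z.2.2, z.1))
    = ∑ x, ∑ y, ∑ w, (if 0 < q (x, y, w) then q (x, y, w) *
        Real.log (q (x, y, w) / ((∑ x', ∑ y', q (x', y', w)) * p (x, y))) else 0) := by
  unfold mutInfo
  have h1 : ∀ z : Fin n × (𝒳 × 𝒴),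
      (if 0 < q (z.2.1, z.2.2, z.1) then q (z.2.1, z.2.2, z.1) *
        Real.log (q (z.2.1, z.2.2, z.1) /
          ((∑ b : 𝒳 × 𝒴, q (b.1, b.2, z.1)) * (∑ a : Fin n, q (z.2.1, z.2.2, a)))) else 0)
      = (fun w x y => if 0 < q (x, y, w) then q (x, y, w) *
          Real.log (q (x, y, w) / ((∑ x', ∑ y', q (x', y', w)) * p (x, y))) else 0)
          z.1 z.2.1 z.2.2 := by
    intro z
    simp only
    rw [show (∑ b : 𝒳 × 𝒴, q (b.1, b.2, z.1)) = ∑ x', ∑ y', q (x', y', z.1) from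
      Fintype.sum_prod_type _]
    rw [hmarg z.2.1 z.2.2]
  exact (Finset.sum_congr rfl fun z _ => h1 z).trans
    (sum_prod_rotate (fun w x y => if 0 < q (x, y, w) then q (x, y, w) *
      Real.log (q (x, y, w) / ((∑ x', ∑ y', q (x', y', w)) * p (x, y))) else 0))

lemma costB_eq (p : 𝒳 × 𝒴 → ℝ) (q : 𝒳 × 𝒴 × Fin n → ℝ) (s : 𝒳 → 𝒮) (t : 𝒴 → 𝒯)
    (hmarg : ∀ x y, ∑ w, q (x, y, w) = p (x, y)) :
    mutInfo (fun z : (𝒮 × 𝒯) × Fin n => margSTW q s t z.1.1 z.1.2 z.2)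
    = ∑ s0, ∑ t0, ∑ w, (if 0 < margSTW q s t s0 t0 w then margSTW q s t s0 t0 w *
        Real.log (margSTW q s t s0 t0 w /
          (margST p s t (s0, t0) * (∑ x, ∑ y, q (x, y, w)))) else 0) := by
  unfold mutInfo
  have h1 : ∀ z : (𝒮 × 𝒯) × Fin n,
      (if 0 < margSTW q s t z.1.1 z.1.2 z.2 then margSTW q s t z.1.1 z.1.2 z.2 *
        Real.log (margSTW q s t z.1.1 z.1.2 z.2 /
          ((∑ b : Fin n, margSTW q s t z.1.1 z.1.2 b) *
           (∑ a : 𝒮 × 𝒯, margSTW q s t a.1 a.2 z.2))) else 0)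
      = (fun s0 t0 w => if 0 < margSTW q s t s0 t0 w then margSTW q s t s0 t0 w *
          Real.log (margSTW q s t s0 t0 w /
            (margST p s t (s0, t0) * (∑ x, ∑ y, q (x, y, w)))) else 0)
          z.1.1 z.1.2 z.2 := by
    intro z
    simp only
    rw [show (∑ b : Fin n, margSTW q s t z.1.1 z.1.2 b) = margST p s t (z.1.1, z.1.2) from
      sum_w_margSTW p q s t hmarg z.1.1 z.1.2]
    rw [show (∑ a : 𝒮 × 𝒯, margSTW q s t a.1 a.2 z.2) = ∑ x, ∑ y, q (x, y, z.2) from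
      (Fintype.sum_prod_type _).trans (sum_st_margSTW q s t z.2)]
  exact (Finset.sum_congr rfl fun z _ => h1 z).trans
    (sum_prodl_rotate (fun s0 t0 w => if 0 < margSTW q s t s0 t0 w then margSTW q s t s0 t0 w *
      Real.log (margSTW q s t s0 t0 w /
        (margST p s t (s0, t0) * (∑ x, ∑ y, q (x, y, w)))) else 0))

/-- Under condition (iii), the two mutual informations agree. -/
lemma cost_eq_of_iii (p : 𝒳 × 𝒴 → ℝ) (q : 𝒳 × 𝒴 × Fin n → ℝ) (s : 𝒳 → 𝒮) (t : 𝒴 → 𝒯)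
    (hq0 : ∀ z, 0 ≤ q z)
    (hmarg : ∀ x y, ∑ w, q (x, y, w) = p (x, y))
    (hiii : ∀ x y (w : Fin n), q (x, y, w) * margST p s t (s x, t y)
        = p (x, y) * margSTW q s t (s x) (t y) w) :
    mutInfo (fun z : Fin n × (𝒳 × 𝒴) => q (z.2.1, z.2.2, z.1))
    = mutInfo (fun z : (𝒮 × 𝒯) × Fin n => margSTW q s t z.1.1 z.1.2 z.2) := by
  have hp0 : ∀ z, 0 ≤ p z := by
    intro z
    rw [← hmarg z.1 z.2]
    exact Finset.sum_nonneg fun _ _ => hq0 _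
  rw [costA_eq p q hmarg, costB_eq p q s t hmarg]
  rw [← regroup q hq0 s t (fun s0 t0 w => Real.log (margSTW q s t s0 t0 w /
      (margST p s t (s0, t0) * (∑ x, ∑ y, q (x, y, w)))))]
  refine Finset.sum_congr rfl fun x _ => Finset.sum_congr rfl fun y _ =>
    Finset.sum_congr rfl fun w _ => ?_
  by_cases hq : 0 < q (x, y, w)
  · rw [if_pos hq, if_pos hq]
    have hple : q (x, y, w) ≤ p (x, y) := by
      rw [← hmarg x y]
      exact Finset.single_le_sum (f := fun w' => q (x, y, w')) (fun i _ => hq0 _)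
        (Finset.mem_univ w)
    have hppos : 0 < p (x, y) := lt_of_lt_of_le hq hple
    have hSTpos : 0 < margST p s t (s x, t y) :=
      lt_of_lt_of_le hppos (le_margST p hp0 s t x y)
    have hratio : q (x, y, w) / p (x, y)
        = margSTW q s t (s x) (t y) w / margST p s t (s x, t y) := by
      rw [div_eq_div_iff (ne_of_gt hppos) (ne_of_gt hSTpos)]
      linarith [hiii x y w]
    have hA : q (x, y, w) / ((∑ x', ∑ y', q (x', y', w)) * p (x, y))
        = q (x, y, w) / p (x, y) / (∑ x', ∑ y', q (x', y', w)) := by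
      rw [div_div]; ring_nf
    have hB : margSTW q s t (s x) (t y) w /
          (margST p s t (s x, t y) * (∑ x', ∑ y', q (x', y', w)))
        = margSTW q s t (s x) (t y) w / margST p s t (s x, t y) /
          (∑ x', ∑ y', q (x', y', w)) := by
      rw [div_div]
    rw [hA, hB, hratio]
  · rw [if_neg hq, if_neg hq]

/-- Data-processing inequality: `I(W; S,T) ≤ I(W; X,Y)`. -/
lemma dpi (p : 𝒳 × 𝒴 → ℝ) (q : 𝒳 × 𝒴 × Fin n → ℝ) (s : 𝒳 → 𝒮) (t : 𝒴 → 𝒯)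
    (hp1 : ∑ z, p z = 1) (hq0 : ∀ z, 0 ≤ q z)
    (hmarg : ∀ x y, ∑ w, q (x, y, w) = p (x, y)) :
    mutInfo (fun z : (𝒮 × 𝒯) × Fin n => margSTW q s t z.1.1 z.1.2 z.2)
    ≤ mutInfo (fun z : Fin n × (𝒳 × 𝒴) => q (z.2.1, z.2.2, z.1)) := by
  classical
  have hp0 : ∀ z, 0 ≤ p z := by
    intro z
    rw [← hmarg z.1 z.2]
    exact Finset.sum_nonneg fun _ _ => hq0 _
  set S : Finset (𝒳 × 𝒴 × Fin n) :=
    Finset.univ.filter (fun z => 0 < q (z.1, z.2.1, z.2.2)) with hS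
  have hmemS : ∀ z ∈ S, 0 < q (z.1, z.2.1, z.2.2) := fun z hz => (Finset.mem_filter.mp hz).2
  -- positivity facts on S
  have hppos : ∀ z ∈ S, 0 < p (z.1, z.2.1) := by
    intro z hz
    refine lt_of_lt_of_le (hmemS z hz) ?_
    rw [← hmarg z.1 z.2.1]
    exact Finset.single_le_sum (f := fun w' => q (z.1, z.2.1, w')) (fun i _ => hq0 _)
      (Finset.mem_univ z.2.2)
  have hSTpos : ∀ z ∈ S, 0 < margST p s t (s z.1, t z.2.1) :=
    fun z hz => lt_of_lt_of_le (hppos z hz) (le_margST p hp0 s t z.1 z.2.1)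
  have hMpos : ∀ z ∈ S, 0 < margSTW q s t (s z.1) (t z.2.1) z.2.2 :=
    fun z hz => lt_of_lt_of_le (hmemS z hz) (le_margSTW q hq0 s t z.1 z.2.1 z.2.2)
  have hWpos : ∀ z ∈ S, 0 < ∑ x', ∑ y', q (x', y', z.2.2) :=
    fun z hz => lt_of_lt_of_le (hmemS z hz) (q_le_qW q hq0 z.1 z.2.1 z.2.2)
  -- the two costs as sums over S
  have hcostA : mutInfo (fun z : Fin n × (𝒳 × 𝒴) => q (z.2.1, z.2.2, z.1))
      = ∑ z ∈ S, q (z.1, z.2.1, z.2.2) * Real.log (q (z.1, z.2.1, z.2.2) /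
          ((∑ x', ∑ y', q (x', y', z.2.2)) * p (z.1, z.2.1))) := by
    rw [costA_eq p q hmarg, ← sum_triple, hS, ← Finset.sum_filter]
  have hcostB : mutInfo (fun z : (𝒮 × 𝒯) × Fin n => margSTW q s t z.1.1 z.1.2 z.2)
      = ∑ z ∈ S, q (z.1, z.2.1, z.2.2) * Real.log (margSTW q s t (s z.1) (t z.2.1) z.2.2 /
          (margST p s t (s z.1, t z.2.1) * (∑ x', ∑ y', q (x', y', z.2.2)))) := by
    rw [costB_eq p q s t hmarg]
    rw [← regroup q hq0 s t (fun s0 t0 w => Real.log (margSTW q s t s0 t0 w /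
        (margST p s t (s0, t0) * (∑ x, ∑ y, q (x, y, w)))))]
    rw [← sum_triple, hS, ← Finset.sum_filter]
  -- difference is a relative entropy
  set b : 𝒳 × 𝒴 × Fin n → ℝ := fun z =>
    p (z.1, z.2.1) * margSTW q s t (s z.1) (t z.2.1) z.2.2 /
      margST p s t (s z.1, t z.2.1) with hb
  have hbposS : ∀ z ∈ S, 0 < b z := by
    intro z hz
    exact div_pos (mul_pos (hppos z hz) (hMpos z hz)) (hSTpos z hz)
  have hdiff : mutInfo (fun z : Fin n × (𝒳 × 𝒴) => q (z.2.1, z.2.2, z.1))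
      - mutInfo (fun z : (𝒮 × 𝒯) × Fin n => margSTW q s t z.1.1 z.1.2 z.2)
      = ∑ z ∈ S, q (z.1, z.2.1, z.2.2) * Real.log (q (z.1, z.2.1, z.2.2) / b z) := by
    rw [hcostA, hcostB, ← Finset.sum_sub_distrib]
    refine Finset.sum_congr rfl fun z hz => ?_
    rw [← mul_sub]
    congr 1
    have hA0 : q (z.1, z.2.1, z.2.2) /
        ((∑ x', ∑ y', q (x', y', z.2.2)) * p (z.1, z.2.1)) ≠ 0 :=
      ne_of_gt (div_pos (hmemS z hz) (mul_pos (hWpos z hz) (hppos z hz)))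
    have hB0 : margSTW q s t (s z.1) (t z.2.1) z.2.2 /
        (margST p s t (s z.1, t z.2.1) * (∑ x', ∑ y', q (x', y', z.2.2))) ≠ 0 :=
      ne_of_gt (div_pos (hMpos z hz) (mul_pos (hSTpos z hz) (hWpos z hz)))
    rw [← Real.log_div hA0 hB0]
    congr 1
    have h1 := ne_of_gt (hppos z hz)
    have h2 := ne_of_gt (hSTpos z hz)
    have h3 := ne_of_gt (hMpos z hz)
    have h4 := ne_of_gt (hWpos z hz)
    rw [hb]
    field_simp
  -- sum of q over S is 1
  have hq1 : ∑ z : 𝒳 × 𝒴 × Fin n, q (z.1, z.2.1, z.2.2) = 1 := by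
    rw [sum_triple (fun x y w => q (x, y, w))]
    have : ∀ x : 𝒳, ∀ y : 𝒴, ∑ w, q (x, y, w) = p (x, y) := hmarg
    rw [Finset.sum_congr rfl fun x _ => Finset.sum_congr rfl fun y _ => hmarg x y]
    rw [← Fintype.sum_prod_type]
    exact hp1
  have hsa : ∑ z ∈ S, q (z.1, z.2.1, z.2.2) = 1 := by
    rw [← hq1]
    refine Finset.sum_subset S.subset_univ ?_
    intro z _ hz
    have hnz : ¬ 0 < q (z.1, z.2.1, z.2.2) := by simpa [hS] using hz
    exact le_antisymm (not_lt.mp hnz) (hq0 _)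
  -- sum of b over S is at most 1
  have hsb : ∑ z ∈ S, b z ≤ 1 := by
    set b' : 𝒳 × 𝒴 × Fin n → ℝ := fun z =>
      if 0 < margST p s t (s z.1, t z.2.1) then b z else 0 with hb'
    have heq : ∀ z ∈ S, b z = b' z := by
      intro z hz
      rw [hb']
      simp only
      rw [if_pos (hSTpos z hz)]
    have hb'0 : ∀ z, 0 ≤ b' z := by
      intro z
      rw [hb']
      simp only
      split
      · exact div_nonneg (mul_nonneg (hp0 _) (margSTW_nonneg q hq0 s t _ _ _))
          (le_of_lt (by assumption))
      · exact le_refl 0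
    have htot : ∑ z : 𝒳 × 𝒴 × Fin n, b' z = 1 := by
      rw [sum_triple (fun x y w => b' (x, y, w))]
      have hxy : ∀ x y, ∑ w, b' (x, y, w) = p (x, y) := by
        intro x y
        by_cases hst : 0 < margST p s t (s x, t y)
        · have : ∀ w : Fin n, b' (x, y, w)
              = p (x, y) * margSTW q s t (s x) (t y) w / margST p s t (s x, t y) := by
            intro w; rw [hb']; simp only; rw [if_pos hst]
          rw [Finset.sum_congr rfl fun w _ => this w]
          rw [← Finset.sum_div, ← Finset.mul_sum]
          rw [sum_w_margSTW p q s t hmarg (s x) (t y)]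
          rw [mul_div_assoc, div_self (ne_of_gt hst), mul_one]
        · have hpz : p (x, y) = 0 := by
            have h1 : margST p s t (s x, t y) = 0 := by
              have h2 : 0 ≤ margST p s t (s x, t y) := by
                unfold margST
                exact Finset.sum_nonneg fun _ _ => Finset.sum_nonneg fun _ _ => hp0 _
              linarith [not_lt.mp hst]
            have := le_margST p hp0 s t x y
            linarith [hp0 (x, y)]
          have : ∀ w : Fin n, b' (x, y, w) = 0 := by
            intro w; rw [hb']; simp only; rw [if_neg hst]
          rw [Finset.sum_congr rfl fun w _ => this w, Finset.sum_const, smul_zero, hpz]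
      rw [Finset.sum_congr rfl fun x _ => Finset.sum_congr rfl fun y _ => hxy x y]
      rw [← Fintype.sum_prod_type]
      exact hp1
    calc ∑ z ∈ S, b z = ∑ z ∈ S, b' z := Finset.sum_congr rfl heq
      _ ≤ ∑ z : 𝒳 × 𝒴 × Fin n, b' z :=
          Finset.sum_le_sum_of_subset_of_nonneg S.subset_univ (fun z _ _ => hb'0 z)
      _ = 1 := htot
  have hgibbs := gibbs_aux S (fun z => q (z.1, z.2.1, z.2.2)) b hmemS hbposS
  have h5 : (0:ℝ) ≤ ∑ z ∈ S, q (z.1, z.2.1, z.2.2) *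
      Real.log (q (z.1, z.2.1, z.2.2) / b z) := by
    calc (0:ℝ) = 1 - 1 := by ring
      _ ≤ (∑ z ∈ S, q (z.1, z.2.1, z.2.2)) - ∑ z ∈ S, b z := by rw [hsa]; linarith
      _ ≤ _ := hgibbs
  linarith [hdiff, h5]

end CostLemmas


section DeriveCI

variable [Fintype 𝒳] [Fintype 𝒴] [Fintype 𝒮] [Fintype 𝒯] {n : ℕ}

/-- From constraints (iii) and (iv), derive the star identity
`q(x,y,w) pS pT = pX pY qSTW`. -/
lemma star_identity (p : 𝒳 × 𝒴 → ℝ) (s : 𝒳 → 𝒮) (t : 𝒴 → 𝒯)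
    (hs : SuffS p s) (ht : SuffT p t) (hp0 : ∀ z, 0 ≤ p z)
    (q : 𝒳 × 𝒴 × Fin n → ℝ) (hq0 : ∀ z, 0 ≤ q z)
    (hmarg : ∀ x y, ∑ w, q (x, y, w) = p (x, y))
    (hiii : ∀ x y (w : Fin n), q (x, y, w) * margST p s t (s x, t y)
        = p (x, y) * margSTW q s t (s x) (t y) w) :
    ∀ x y (w : Fin n), q (x, y, w) * (margS p s (s x) * margT p t (t y))
      = margX p x * margY p y * margSTW q s t (s x) (t y) w := by
  have hkey := key_identity p s t hs ht
  intro x y w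
  by_cases hst : 0 < margST p s t (s x, t y)
  · refine mul_right_cancel₀ (ne_of_gt hst) ?_
    linear_combination (margS p s (s x) * margT p t (t y)) * hiii x y w
      + margSTW q s t (s x) (t y) w * hkey x y
  · have hst0 : margST p s t (s x, t y) = 0 := by
      refine le_antisymm (not_lt.mp hst) ?_
      unfold margST
      exact Finset.sum_nonneg fun _ _ => Finset.sum_nonneg fun _ _ => hp0 _
    have hpz : ∀ x' y', s x' = s x → t y' = t y → p (x', y') = 0 := by
      intro x' y' hx' hy'
      have h1 := le_margST p hp0 s t x' y'
      rw [hx', hy', hst0] at h1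
      exact le_antisymm h1 (hp0 _)
    have hqz : ∀ x' y', s x' = s x → t y' = t y → q (x', y', w) = 0 := by
      intro x' y' hx' hy'
      have h1 : ∑ w', q (x', y', w') = 0 := by rw [hmarg]; exact hpz x' y' hx' hy'
      exact (Finset.sum_eq_zero_iff_of_nonneg fun i _ => hq0 _).mp h1 w (Finset.mem_univ w)
    have hMz : margSTW q s t (s x) (t y) w = 0 := by
      unfold margSTW
      refine Finset.sum_eq_zero fun x' hx' => Finset.sum_eq_zero fun y' hy' => ?_
      exact hqz x' y' (Finset.mem_filter.mp hx').2 (Finset.mem_filter.mp hy').2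
    rw [hMz, hqz x y rfl rfl, mul_zero, zero_mul]

/-- From constraints (iii) and (iv), together with sufficiency, derive the
conditional independence `X ⊥ Y | W`. -/
lemma derive_CI (p : 𝒳 × 𝒴 → ℝ) (s : 𝒳 → 𝒮) (t : 𝒴 → 𝒯)
    (hs : SuffS p s) (ht : SuffT p t) (hp0 : ∀ z, 0 ≤ p z)
    (hX : ∀ x, 0 < margX p x) (hY : ∀ y, 0 < margY p y)
    (q : 𝒳 × 𝒴 × Fin n → ℝ) (hq0 : ∀ z, 0 ≤ q z)
    (hmarg : ∀ x y, ∑ w, q (x, y, w) = p (x, y))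
    (hiii : ∀ x y (w : Fin n), q (x, y, w) * margST p s t (s x, t y)
        = p (x, y) * margSTW q s t (s x) (t y) w)
    (hiv : ∀ x y (w : Fin n),
        q (x, y, w) * margS p s (s x) * margT p t (t y)
            * (∑ x', ∑ y', q (x', y', w))
          = margX p x * margY p y
            * (∑ x' ∈ Finset.univ.filter (fun x' => s x' = s x), ∑ y', q (x', y', w))
            * (∑ y' ∈ Finset.univ.filter (fun y' => t y' = t y), ∑ x', q (x', y', w))) :
    ∀ (a : 𝒳) (b : 𝒴) (w : Fin n), q (a, b, w) * (∑ a', ∑ b', q (a', b', w))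
      = (∑ b', q (a, b', w)) * (∑ a', q (a', b, w)) := by
  have hstar := star_identity p s t hs ht hp0 q hq0 hmarg hiii
  -- `I(W;ST)`-level conditional independence from (iv)
  have hdagSTW : ∀ x y (w : Fin n),
      margSTW q s t (s x) (t y) w * (∑ x', ∑ y', q (x', y', w))
        = (∑ x' ∈ Finset.univ.filter (fun x' => s x' = s x), ∑ y', q (x', y', w))
          * (∑ y' ∈ Finset.univ.filter (fun y' => t y' = t y), ∑ x', q (x', y', w)) := by
    intro x y w
    refine mul_left_cancel₀ (ne_of_gt (mul_pos (hX x) (hY y))) ?_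
    linear_combination hiv x y w - (∑ x', ∑ y', q (x', y', w)) * hstar x y w
  -- fiberwise versions of the marginal chains
  have hXWfiber : ∀ (x : 𝒳) (t0 : 𝒯) (w : Fin n),
      (∑ y ∈ Finset.univ.filter (fun y => t y = t0), q (x, y, w)) * margS p s (s x)
        = margX p x * margSTW q s t (s x) t0 w := by
    intro x t0 w
    rcases (Finset.univ.filter (fun y => t y = t0)).eq_empty_or_nonempty with hemp | ⟨y0, hy0⟩
    · rw [hemp, Finset.sum_empty, zero_mul]
      have hM : margSTW q s t (s x) t0 w = 0 := by
        unfold margSTW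
        rw [hemp]
        exact Finset.sum_eq_zero fun _ _ => Finset.sum_empty
      rw [hM, mul_zero]
    · have hty0 : t y0 = t0 := (Finset.mem_filter.mp hy0).2
      have hpT0 : 0 < margT p t t0 := by
        rw [← hty0]; exact lt_of_lt_of_le (hY y0) (margY_le_margT p hp0 t y0)
      refine mul_right_cancel₀ (ne_of_gt hpT0) ?_
      have h1 : (∑ y ∈ Finset.univ.filter (fun y => t y = t0), q (x, y, w))
            * margS p s (s x) * margT p t t0
          = ∑ y ∈ Finset.univ.filter (fun y => t y = t0),
              q (x, y, w) * (margS p s (s x) * margT p t (t y)) := by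
        rw [Finset.sum_mul, Finset.sum_mul]
        refine Finset.sum_congr rfl fun y hy => ?_
        rw [(Finset.mem_filter.mp hy).2]
        ring
      rw [h1]
      have h2 : ∀ y ∈ Finset.univ.filter (fun y => t y = t0),
          q (x, y, w) * (margS p s (s x) * margT p t (t y))
            = margX p x * margY p y * margSTW q s t (s x) t0 w := by
        intro y hy
        have hty : t y = t0 := (Finset.mem_filter.mp hy).2
        rw [← hty]
        exact hstar x y w
      rw [Finset.sum_congr rfl h2]
      unfold margT
      rw [Finset.mul_sum]
      exact Finset.sum_congr rfl fun y _ => by ring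
  have hYWfiber : ∀ (y : 𝒴) (s0 : 𝒮) (w : Fin n),
      (∑ x ∈ Finset.univ.filter (fun x => s x = s0), q (x, y, w)) * margT p t (t y)
        = margY p y * margSTW q s t s0 (t y) w := by
    intro y s0 w
    rcases (Finset.univ.filter (fun x => s x = s0)).eq_empty_or_nonempty with hemp | ⟨x0, hx0⟩
    · rw [hemp, Finset.sum_empty, zero_mul]
      have hM : margSTW q s t s0 (t y) w = 0 := by
        unfold margSTW
        rw [hemp, Finset.sum_empty]
      rw [hM, mul_zero]
    · have hsx0 : s x0 = s0 := (Finset.mem_filter.mp hx0).2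
      have hpS0 : 0 < margS p s s0 := by
        rw [← hsx0]; exact lt_of_lt_of_le (hX x0) (margX_le_margS p hp0 s x0)
      refine mul_right_cancel₀ (ne_of_gt hpS0) ?_
      have h1 : (∑ x ∈ Finset.univ.filter (fun x => s x = s0), q (x, y, w))
            * margT p t (t y) * margS p s s0
          = ∑ x ∈ Finset.univ.filter (fun x => s x = s0),
              q (x, y, w) * (margS p s (s x) * margT p t (t y)) := by
        rw [Finset.sum_mul, Finset.sum_mul]
        refine Finset.sum_congr rfl fun x hx => ?_
        rw [(Finset.mem_filter.mp hx).2]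
        ring
      rw [h1]
      have h2 : ∀ x ∈ Finset.univ.filter (fun x => s x = s0),
          q (x, y, w) * (margS p s (s x) * margT p t (t y))
            = margX p x * margY p y * margSTW q s t s0 (t y) w := by
        intro x hx
        have hsx : s x = s0 := (Finset.mem_filter.mp hx).2
        rw [← hsx]
        exact hstar x y w
      rw [Finset.sum_congr rfl h2]
      unfold margS
      rw [Finset.mul_sum]
      exact Finset.sum_congr rfl fun x _ => by ring
  have hXW : ∀ (x : 𝒳) (w : Fin n), (∑ y', q (x, y', w)) * margS p s (s x)
      = margX p x * (∑ x' ∈ Finset.univ.filter (fun x' => s x' = s x),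
          ∑ y', q (x', y', w)) := by
    intro x w
    rw [← sum_t_margSTW q s t (s x) w, Finset.mul_sum,
      ← Finset.sum_fiberwise Finset.univ t (fun y => q (x, y, w)), Finset.sum_mul]
    exact Finset.sum_congr rfl fun t0 _ => hXWfiber x t0 w
  have hYW : ∀ (y : 𝒴) (w : Fin n), (∑ x', q (x', y, w)) * margT p t (t y)
      = margY p y * (∑ y' ∈ Finset.univ.filter (fun y' => t y' = t y),
          ∑ x', q (x', y', w)) := by
    intro y w
    rw [← sum_s_margSTW q s t (t y) w, Finset.mul_sum,
      ← Finset.sum_fiberwise Finset.univ s (fun x => q (x, y, w)), Finset.sum_mul]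
    exact Finset.sum_congr rfl fun s0 _ => hYWfiber y s0 w
  intro x y w
  have hpS : (0:ℝ) < margS p s (s x) := lt_of_lt_of_le (hX x) (margX_le_margS p hp0 s x)
  have hpT : (0:ℝ) < margT p t (t y) := lt_of_lt_of_le (hY y) (margY_le_margT p hp0 t y)
  refine mul_right_cancel₀ (ne_of_gt (mul_pos hpS hpT)) ?_
  linear_combination (∑ x', ∑ y', q (x', y', w)) * hstar x y w
    + margX p x * margY p y * hdagSTW x y w
    - margX p x * (∑ x' ∈ Finset.univ.filter (fun x' => s x' = s x), ∑ y', q (x', y', w))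
        * hYW y w
    - (∑ a', q (a', y, w)) * margT p t (t y) * hXW x w

end DeriveCI


section Totals

variable [Fintype 𝒳] [Fintype 𝒴] [Fintype 𝒮] [Fintype 𝒯] {n : ℕ}

lemma total_of_marg (p : 𝒳 × 𝒴 → ℝ) (q : 𝒳 × 𝒴 × Fin n → ℝ)
    (hmarg : ∀ x y, ∑ w, q (x, y, w) = p (x, y)) (hp1 : ∑ z : 𝒳 × 𝒴, p z = 1) :
    ∑ z : 𝒳 × 𝒴 × Fin n, q z = 1 := by
  refine Eq.trans (sum_triple (fun x y w => q (x, y, w))) ?_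
  refine Eq.trans (Finset.sum_congr rfl fun x _ =>
    Finset.sum_congr rfl fun y _ => hmarg x y) ?_
  exact (Fintype.sum_prod_type (fun z : 𝒳 × 𝒴 => p z)).symm.trans hp1

lemma sum_one_A (p : 𝒳 × 𝒴 → ℝ) (q : 𝒳 × 𝒴 × Fin n → ℝ)
    (hmarg : ∀ x y, ∑ w, q (x, y, w) = p (x, y)) (hp1 : ∑ z : 𝒳 × 𝒴, p z = 1) :
    ∑ z : Fin n × (𝒳 × 𝒴), q (z.2.1, z.2.2, z.1) = 1 := by
  refine Eq.trans (sum_prod_rotate (fun w x y => q (x, y, w))) ?_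
  refine Eq.trans (Finset.sum_congr rfl fun x _ =>
    Finset.sum_congr rfl fun y _ => hmarg x y) ?_
  exact (Fintype.sum_prod_type (fun z : 𝒳 × 𝒴 => p z)).symm.trans hp1

lemma sum_one_B (p : 𝒳 × 𝒴 → ℝ) (q : 𝒳 × 𝒴 × Fin n → ℝ) (s : 𝒳 → 𝒮) (t : 𝒴 → 𝒯)
    (hmarg : ∀ x y, ∑ w, q (x, y, w) = p (x, y)) (hp1 : ∑ z : 𝒳 × 𝒴, p z = 1) :
    ∑ z : (𝒮 × 𝒯) × Fin n, margSTW q s t z.1.1 z.1.2 z.2 = 1 := by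
  refine Eq.trans (sum_prodl_rotate (fun s0 t0 w => margSTW q s t s0 t0 w)) ?_
  refine Eq.trans (Finset.sum_congr rfl fun s0 _ =>
    Finset.sum_congr rfl fun t0 _ => sum_w_margSTW p q s t hmarg s0 t0) ?_
  refine Eq.trans ?_ ((Fintype.sum_prod_type (fun z : 𝒳 × 𝒴 => p z)).symm.trans hp1)
  unfold margST
  exact sum_fiber_pair s t (fun x y => p (x, y))

end Totals

/-- Under sufficiency, Wyner's common information is achieved by
auxiliary variables `W` with `W - (S,T) - (X,Y)` and `X - S - W - T - Y`. -/
theorem wyner_restricted_optimization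
    [Fintype 𝒳] [Nonempty 𝒳] [Fintype 𝒴] [Nonempty 𝒴]
    [Fintype 𝒮] [Nonempty 𝒮] [Fintype 𝒯] [Nonempty 𝒯]
    (p : 𝒳 × 𝒴 → ℝ) (hp : IsPMF p)
    (hX : ∀ x, 0 < margX p x) (hY : ∀ y, 0 < margY p y)
    (s : 𝒳 → 𝒮) (t : 𝒴 → 𝒯)
    (hs : SuffS p s) (ht : SuffT p t) :
    wynerCI p = sInf { c | ∃ (n : ℕ) (q : 𝒳 × 𝒴 × Fin n → ℝ),
      IsPMF q ∧
      (∀ x y, ∑ w, q (x, y, w) = p (x, y)) ∧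
      (∀ x y (w : Fin n), q (x, y, w) * margST p s t (s x, t y)
        = p (x, y) * margSTW q s t (s x) (t y) w) ∧
      (∀ x y (w : Fin n),
        q (x, y, w) * margS p s (s x) * margT p t (t y)
            * (∑ x', ∑ y', q (x', y', w))
          = margX p x * margY p y
            * (∑ x' ∈ Finset.univ.filter (fun x' => s x' = s x), ∑ y', q (x', y', w))
            * (∑ y' ∈ Finset.univ.filter (fun y' => t y' = t y), ∑ x', q (x', y', w))) ∧
      c = mutInfo (fun z : (𝒮 × 𝒯) × Fin n => margSTW q s t z.1.1 z.1.2 z.2) } := by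
  obtain ⟨hp0, hp1⟩ := hp
  have hkey := key_identity p s t hs ht
  have hpS : ∀ x, (0:ℝ) < margS p s (s x) :=
    fun x => lt_of_lt_of_le (hX x) (margX_le_margS p hp0 s x)
  have hpT : ∀ y, (0:ℝ) < margT p t (t y) :=
    fun y => lt_of_lt_of_le (hY y) (margY_le_margT p hp0 t y)
  -- the canonical witness `W = (S,T)` for the restricted set
  set n0 : ℕ := Fintype.card (𝒮 × 𝒯) with hn0
  set e : (𝒮 × 𝒯) ≃ Fin n0 := Fintype.equivFin (𝒮 × 𝒯) with he
  set q0 : 𝒳 × 𝒴 × Fin n0 → ℝ :=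
    fun z => if e (s z.1, t z.2.1) = z.2.2 then p (z.1, z.2.1) else 0 with hq0def
  have hq00 : ∀ z, 0 ≤ q0 z := by
    intro z
    simp only [hq0def]
    split
    · exact hp0 _
    · exact le_refl 0
  have hq0marg : ∀ x y, ∑ w, q0 (x, y, w) = p (x, y) := by
    intro x y
    simp only [hq0def]
    rw [Finset.sum_ite_eq]
    simp
  have hq0pmf : IsPMF q0 := ⟨hq00, total_of_marg p q0 hq0marg hp1⟩
  have hq0STW : ∀ s0 t0 w, margSTW q0 s t s0 t0 w
      = if e (s0, t0) = w then margST p s t (s0, t0) else 0 := by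
    intro s0 t0 w
    unfold margSTW margST
    by_cases h : e (s0, t0) = w
    · rw [if_pos h]
      refine Finset.sum_congr rfl fun x hx => Finset.sum_congr rfl fun y hy => ?_
      have hx' : s x = s0 := (Finset.mem_filter.mp hx).2
      have hy' : t y = t0 := (Finset.mem_filter.mp hy).2
      simp only [hq0def]
      rw [hx', hy', if_pos h]
    · rw [if_neg h]
      refine Finset.sum_eq_zero fun x hx => Finset.sum_eq_zero fun y hy => ?_
      have hx' : s x = s0 := (Finset.mem_filter.mp hx).2
      have hy' : t y = t0 := (Finset.mem_filter.mp hy).2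
      simp only [hq0def]
      rw [hx', hy', if_neg h]
  have hiii0 : ∀ x y (w : Fin n0), q0 (x, y, w) * margST p s t (s x, t y)
      = p (x, y) * margSTW q0 s t (s x) (t y) w := by
    intro x y w
    rw [hq0STW (s x) (t y) w]
    simp only [hq0def]
    by_cases h : e (s x, t y) = w
    · rw [if_pos h, if_pos h]
    · rw [if_neg h, if_neg h, zero_mul, mul_zero]
  have hqW0 : ∀ w : Fin n0, (∑ x, ∑ y, q0 (x, y, w)) = margST p s t (e.symm w) := by
    intro w
    refine Eq.trans (sum_st_margSTW q0 s t w).symm ?_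
    refine Eq.trans (Finset.sum_congr rfl fun s0 _ =>
      Finset.sum_congr rfl fun t0 _ => hq0STW s0 t0 w) ?_
    refine Eq.trans (Fintype.sum_prod_type
      (fun st : 𝒮 × 𝒯 => if e st = w then margST p s t st else 0)).symm ?_
    simp only [Equiv.apply_eq_iff_eq_symm_apply]
    rw [Finset.sum_ite_eq' Finset.univ (e.symm w) (fun st => margST p s t st)]
    simp
  have hqSW0 : ∀ (s0 : 𝒮) (w : Fin n0),
      (∑ x' ∈ Finset.univ.filter (fun x' => s x' = s0), ∑ y', q0 (x', y', w))
        = if (e.symm w).1 = s0 then margST p s t (e.symm w) else 0 := by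
    intro s0 w
    refine Eq.trans (sum_t_margSTW q0 s t s0 w).symm ?_
    refine Eq.trans (Finset.sum_congr rfl fun t0 _ => hq0STW s0 t0 w) ?_
    by_cases hc : (e.symm w).1 = s0
    · rw [if_pos hc]
      rw [Finset.sum_eq_single_of_mem (e.symm w).2 (Finset.mem_univ _)]
      · have hpair : (s0, (e.symm w).2) = e.symm w := by rw [← hc]
        rw [hpair]
        rw [if_pos (e.apply_symm_apply w)]
      · intro t0 _ hne
        refine if_neg fun h1 => hne ?_
        have h2 : (s0, t0) = e.symm w := by rw [← h1]; exact (e.symm_apply_apply _).symm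
        rw [← h2]
    · rw [if_neg hc]
      refine Finset.sum_eq_zero fun t0 _ => if_neg fun h1 => hc ?_
      have h2 : (s0, t0) = e.symm w := by rw [← h1]; exact (e.symm_apply_apply _).symm
      rw [← h2]
  have hqTW0 : ∀ (t0 : 𝒯) (w : Fin n0),
      (∑ y' ∈ Finset.univ.filter (fun y' => t y' = t0), ∑ x', q0 (x', y', w))
        = if (e.symm w).2 = t0 then margST p s t (e.symm w) else 0 := by
    intro t0 w
    refine Eq.trans (sum_s_margSTW q0 s t t0 w).symm ?_
    refine Eq.trans (Finset.sum_congr rfl fun s0 _ => hq0STW s0 t0 w) ?_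
    by_cases hc : (e.symm w).2 = t0
    · rw [if_pos hc]
      rw [Finset.sum_eq_single_of_mem (e.symm w).1 (Finset.mem_univ _)]
      · have hpair : ((e.symm w).1, t0) = e.symm w := by rw [← hc]
        rw [hpair]
        rw [if_pos (e.apply_symm_apply w)]
      · intro s0 _ hne
        refine if_neg fun h1 => hne ?_
        have h2 : (s0, t0) = e.symm w := by rw [← h1]; exact (e.symm_apply_apply _).symm
        rw [← h2]
    · rw [if_neg hc]
      refine Finset.sum_eq_zero fun s0 _ => if_neg fun h1 => hc ?_
      have h2 : (s0, t0) = e.symm w := by rw [← h1]; exact (e.symm_apply_apply _).symm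
      rw [← h2]
  have hiv0 : ∀ x y (w : Fin n0),
      q0 (x, y, w) * margS p s (s x) * margT p t (t y) * (∑ x', ∑ y', q0 (x', y', w))
        = margX p x * margY p y
          * (∑ x' ∈ Finset.univ.filter (fun x' => s x' = s x), ∑ y', q0 (x', y', w))
          * (∑ y' ∈ Finset.univ.filter (fun y' => t y' = t y), ∑ x', q0 (x', y', w)) := by
    intro x y w
    rw [hqW0 w, hqSW0 (s x) w, hqTW0 (t y) w]
    by_cases h : e (s x, t y) = w
    · have hsymm : e.symm w = (s x, t y) := by rw [← h]; exact e.symm_apply_apply _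
      rw [hsymm]
      simp only [hq0def]
      rw [if_pos h]
      simp only [eq_self_iff_true, if_true]
      linear_combination margST p s t (s x, t y) * hkey x y
    · simp only [hq0def]
      rw [if_neg h]
      by_cases h1 : (e.symm w).1 = s x
      · have h2 : ¬ (e.symm w).2 = t y := by
          intro h2
          apply h
          have h3 : e.symm w = (s x, t y) := Prod.ext h1 h2
          rw [← h3, e.apply_symm_apply]
        rw [if_neg h2]
        ring
      · rw [if_neg h1]
        ring
  -- conclude
  unfold wynerCI
  apply le_antisymm
  · -- `sInf A ≤ sInf B` since `B ⊆ A`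
    refine csInf_le_csInf ?_ ?_ ?_
    · refine ⟨0, fun c hc => ?_⟩
      obtain ⟨n, q, hpmf, hmarg, _, hceq⟩ := hc
      rw [hceq]
      exact mutInfo_nonneg _ (fun z => hpmf.1 _) (sum_one_A p q hmarg hp1)
    · exact ⟨_, n0, q0, hq0pmf, hq0marg, hiii0, hiv0, rfl⟩
    · intro c hc
      obtain ⟨n, q, hpmf, hmarg, hiii, hiv, hceq⟩ := hc
      exact ⟨n, q, hpmf, hmarg,
        derive_CI p s t hs ht hp0 hX hY q hpmf.1 hmarg hiii hiv,
        hceq.trans (cost_eq_of_iii p q s t hpmf.1 hmarg hiii).symm⟩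
  · -- `sInf B ≤ sInf A`
    refine le_csInf ⟨_, n0, q0, hq0pmf, hq0marg,
      derive_CI p s t hs ht hp0 hX hY q0 hq00 hq0marg hiii0 hiv0, rfl⟩ ?_
    intro c hc
    obtain ⟨n, q, hpmf, hmarg, hCI, hceq⟩ := hc
    have hq0' := hpmf.1
    -- construct the modified distribution `q'`
    set q' : 𝒳 × 𝒴 × Fin n → ℝ := fun z =>
      margX p z.1 * margY p z.2.1 * margSTW q s t (s z.1) (t z.2.1) z.2.2 /
        (margS p s (s z.1) * margT p t (t z.2.1)) with hq'def
    have hq'0 : ∀ z, 0 ≤ q' z := by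
      intro z
      simp only [hq'def]
      exact div_nonneg
        (mul_nonneg (mul_nonneg (le_of_lt (hX _)) (le_of_lt (hY _)))
          (margSTW_nonneg q hq0' s t _ _ _))
        (le_of_lt (mul_pos (hpS _) (hpT _)))
    have hq'val : ∀ x y (w : Fin n), q' (x, y, w) * (margS p s (s x) * margT p t (t y))
        = margX p x * margY p y * margSTW q s t (s x) (t y) w := by
      intro x y w
      simp only [hq'def]
      exact div_mul_cancel₀ _ (ne_of_gt (mul_pos (hpS x) (hpT y)))
    have hq'marg : ∀ x y, ∑ w, q' (x, y, w) = p (x, y) := by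
      intro x y
      simp only [hq'def]
      rw [← Finset.sum_div, ← Finset.mul_sum, sum_w_margSTW p q s t hmarg,
        div_eq_iff (ne_of_gt (mul_pos (hpS x) (hpT y)))]
      linear_combination - hkey x y
    have hq'pmf : IsPMF q' := ⟨hq'0, total_of_marg p q' hq'marg hp1⟩
    have hq'STW : ∀ s0 t0 w, margSTW q' s t s0 t0 w = margSTW q s t s0 t0 w := by
      intro s0 t0 w
      rcases (Finset.univ.filter (fun x => s x = s0)).eq_empty_or_nonempty with
        hXe | ⟨x0, hx0⟩
      · unfold margSTW
        rw [hXe, Finset.sum_empty, Finset.sum_empty]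
      · rcases (Finset.univ.filter (fun y => t y = t0)).eq_empty_or_nonempty with
          hYe | ⟨y0, hy0⟩
        · unfold margSTW
          rw [hYe]
          rw [Finset.sum_congr rfl fun x _ => Finset.sum_empty,
            Finset.sum_congr rfl fun x _ => Finset.sum_empty]
        · have hs0 : s x0 = s0 := (Finset.mem_filter.mp hx0).2
          have ht0 : t y0 = t0 := (Finset.mem_filter.mp hy0).2
          have hpS0 : 0 < margS p s s0 := by rw [← hs0]; exact hpS x0
          have hpT0 : 0 < margT p t t0 := by rw [← ht0]; exact hpT y0
          have h1 : margSTW q' s t s0 t0 w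
              = ∑ x ∈ Finset.univ.filter (fun x => s x = s0),
                  ∑ y ∈ Finset.univ.filter (fun y => t y = t0),
                    margX p x * (margY p y *
                      (margSTW q s t s0 t0 w / (margS p s s0 * margT p t t0))) := by
            show (∑ x ∈ Finset.univ.filter (fun x => s x = s0),
              ∑ y ∈ Finset.univ.filter (fun y => t y = t0), q' (x, y, w)) = _
            refine Finset.sum_congr rfl fun x hx => Finset.sum_congr rfl fun y hy => ?_
            have hsx : s x = s0 := (Finset.mem_filter.mp hx).2
            have hty : t y = t0 := (Finset.mem_filter.mp hy).2
            simp only [hq'def]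
            rw [hsx, hty]
            ring
          rw [h1]
          have h2 : ∑ x ∈ Finset.univ.filter (fun x => s x = s0),
              ∑ y ∈ Finset.univ.filter (fun y => t y = t0),
                margX p x * (margY p y *
                  (margSTW q s t s0 t0 w / (margS p s s0 * margT p t t0)))
              = (∑ x ∈ Finset.univ.filter (fun x => s x = s0), margX p x)
                * (∑ y ∈ Finset.univ.filter (fun y => t y = t0), margY p y)
                * (margSTW q s t s0 t0 w / (margS p s s0 * margT p t t0)) := by
            rw [Finset.sum_mul_sum, Finset.sum_mul]
            refine Finset.sum_congr rfl fun x _ => ?_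
            rw [Finset.sum_mul]
            exact Finset.sum_congr rfl fun y _ => by ring
          rw [h2]
          show margS p s s0 * margT p t t0 *
            (margSTW q s t s0 t0 w / (margS p s s0 * margT p t t0)) = _
          rw [mul_div_cancel₀ _ (ne_of_gt (mul_pos hpS0 hpT0))]
    have hq'qW : ∀ w : Fin n, (∑ x', ∑ y', q' (x', y', w))
        = ∑ x', ∑ y', q (x', y', w) := by
      intro w
      rw [← sum_st_margSTW q' s t w, ← sum_st_margSTW q s t w]
      exact Finset.sum_congr rfl fun s0 _ =>
        Finset.sum_congr rfl fun t0 _ => hq'STW s0 t0 w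
    have hq'SW : ∀ (s0 : 𝒮) (w : Fin n),
        (∑ x' ∈ Finset.univ.filter (fun x' => s x' = s0), ∑ y', q' (x', y', w))
          = ∑ x' ∈ Finset.univ.filter (fun x' => s x' = s0), ∑ y', q (x', y', w) := by
      intro s0 w
      rw [← sum_t_margSTW q' s t s0 w, ← sum_t_margSTW q s t s0 w]
      exact Finset.sum_congr rfl fun t0 _ => hq'STW s0 t0 w
    have hq'TW : ∀ (t0 : 𝒯) (w : Fin n),
        (∑ y' ∈ Finset.univ.filter (fun y' => t y' = t0), ∑ x', q' (x', y', w))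
          = ∑ y' ∈ Finset.univ.filter (fun y' => t y' = t0), ∑ x', q (x', y', w) := by
      intro t0 w
      rw [← sum_s_margSTW q' s t t0 w, ← sum_s_margSTW q s t t0 w]
      exact Finset.sum_congr rfl fun s0 _ => hq'STW s0 t0 w
    have hq'iii : ∀ x y (w : Fin n), q' (x, y, w) * margST p s t (s x, t y)
        = p (x, y) * margSTW q' s t (s x) (t y) w := by
      intro x y w
      rw [hq'STW (s x) (t y) w]
      refine mul_right_cancel₀ (ne_of_gt (mul_pos (hpS x) (hpT y))) ?_
      linear_combination margST p s t (s x, t y) * hq'val x y w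
        - margSTW q s t (s x) (t y) w * hkey x y
    have hdag : ∀ (s0 : 𝒮) (t0 : 𝒯) (w : Fin n),
        margSTW q s t s0 t0 w * (∑ x', ∑ y', q (x', y', w))
          = (∑ x' ∈ Finset.univ.filter (fun x' => s x' = s0), ∑ y', q (x', y', w))
            * (∑ y' ∈ Finset.univ.filter (fun y' => t y' = t0), ∑ x', q (x', y', w)) := by
      intro s0 t0 w
      have h1 : margSTW q s t s0 t0 w * (∑ x', ∑ y', q (x', y', w))
          = ∑ x ∈ Finset.univ.filter (fun x => s x = s0),
              ∑ y ∈ Finset.univ.filter (fun y => t y = t0),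
                q (x, y, w) * (∑ x', ∑ y', q (x', y', w)) := by
        show (∑ x ∈ Finset.univ.filter (fun x => s x = s0),
          ∑ y ∈ Finset.univ.filter (fun y => t y = t0), q (x, y, w)) * _ = _
        rw [Finset.sum_mul]
        exact Finset.sum_congr rfl fun x _ => Finset.sum_mul ..
      rw [h1]
      rw [Finset.sum_congr rfl fun x _ => Finset.sum_congr rfl fun y _ => hCI x y w]
      exact (Finset.sum_mul_sum _ _ _ _).symm
    have hq'iv : ∀ x y (w : Fin n),
        q' (x, y, w) * margS p s (s x) * margT p t (t y) * (∑ x', ∑ y', q' (x', y', w))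
          = margX p x * margY p y
            * (∑ x' ∈ Finset.univ.filter (fun x' => s x' = s x), ∑ y', q' (x', y', w))
            * (∑ y' ∈ Finset.univ.filter (fun y' => t y' = t y), ∑ x', q' (x', y', w)) := by
      intro x y w
      rw [hq'qW w, hq'SW (s x) w, hq'TW (t y) w]
      linear_combination (∑ x', ∑ y', q (x', y', w)) * hq'val x y w
        + margX p x * margY p y * hdag (s x) (t y) w
    -- membership and the data-processing inequality
    have hstep1 : sInf {c | ∃ (n : ℕ) (q : 𝒳 × 𝒴 × Fin n → ℝ),
        IsPMF q ∧
        (∀ x y, ∑ w, q (x, y, w) = p (x, y)) ∧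
        (∀ x y (w : Fin n), q (x, y, w) * margST p s t (s x, t y)
          = p (x, y) * margSTW q s t (s x) (t y) w) ∧
        (∀ x y (w : Fin n),
          q (x, y, w) * margS p s (s x) * margT p t (t y)
              * (∑ x', ∑ y', q (x', y', w))
            = margX p x * margY p y
              * (∑ x' ∈ Finset.univ.filter (fun x' => s x' = s x), ∑ y', q (x', y', w))
              * (∑ y' ∈ Finset.univ.filter (fun y' => t y' = t y), ∑ x', q (x', y', w))) ∧
        c = mutInfo (fun z : (𝒮 × 𝒯) × Fin n => margSTW q s t z.1.1 z.1.2 z.2) }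
        ≤ mutInfo (fun z : (𝒮 × 𝒯) × Fin n => margSTW q' s t z.1.1 z.1.2 z.2) := by
      refine csInf_le ⟨0, fun c hc => ?_⟩
        ⟨n, q', hq'pmf, hq'marg, hq'iii, hq'iv, rfl⟩
      obtain ⟨m, r, hrpmf, hrmarg, _, _, hceq⟩ := hc
      rw [hceq]
      exact mutInfo_nonneg _ (fun z => margSTW_nonneg r hrpmf.1 s t _ _ _)
        (sum_one_B p r s t hrmarg hp1)
    have heqf : (fun z : (𝒮 × 𝒯) × Fin n => margSTW q' s t z.1.1 z.1.2 z.2)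
        = (fun z : (𝒮 × 𝒯) × Fin n => margSTW q s t z.1.1 z.1.2 z.2) :=
      funext fun z => hq'STW z.1.1 z.1.2 z.2
    have hstep2 : mutInfo (fun z : (𝒮 × 𝒯) × Fin n => margSTW q s t z.1.1 z.1.2 z.2)
        ≤ mutInfo (fun z : Fin n × (𝒳 × 𝒴) => q (z.2.1, z.2.2, z.1)) :=
      dpi p q s t hp1 hq0' hmarg
    rw [hceq]
    calc sInf _ ≤ mutInfo (fun z : (𝒮 × 𝒯) × Fin n => margSTW q' s t z.1.1 z.1.2 z.2) :=
          hstep1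
      _ = mutInfo (fun z : (𝒮 × 𝒯) × Fin n => margSTW q s t z.1.1 z.1.2 z.2) := by
          rw [heqf]
      _ ≤ _ := hstep2

end
end

section
/- Suppose s : 𝒳 → 𝒮 and t : 𝒴 → 𝒯 are both sufficient. Let 𝒲 be a nonempty finite type and q a joint pmf on 𝒳 × 𝒴 × 𝒲 whose (𝒳,𝒴)-marginal is p and which satisfies the conditional independence X⊥Y given W: q(x,y,w)·qW(w) = qXW(x,w)·qYW(y,w) for all x,y,w. Then there exists a joint pmf q' on 𝒳 × 𝒴 × 𝒲 with (𝒳,𝒴)-marginal p such that: (i) q'(x,y,w)·pST(s(x),t(y)) = p(x,y)·q'STW(s(x),t(y),w) for all x,y,w (Markov relation (X,Y)−(S,T)−W'); (ii) q'STW = qSTW, where qSTW(s0,t0,w) = ∑_{x : s(x)=s0, y : t(y)=t0} q(x,y,w); (iii) q'(x,y,w)·pS(s(x))·pT(t(y))·q'W(w) = pX(x)·pY(y)·q'SW(s(x),w)·q'TW(t(y),w) for all x,y,w (chain X−S−W'−T−Y); and (iv) I_{q'}(W;(X,Y)) = I_q(W;(S,T)) = I_q(W;(X,Y)) − I_q(W;(X,Y)|(S,T)),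 where I_q(W;(S,T)) is computed from the joint distribution of ((s(x),t(y)),w) under q and I_q(W;(X,Y)|(S,T)) = ∑_{(x,y,w) : q(x,y,w)>0} q(x,y,w)·log( q(x,y,w)·pST(s(x),t(y)) / ( qSTW(s(x),t(y),w)·p(x,y) ) ). -/
open Finset

noncomputable section
open scoped Classical

variable {𝒳 𝒴 𝒮 𝒯 : Type*}

/-- Fibre decomposition of a sum over a fintype. -/
lemma fib1 {α κ : Type*} [Fintype α] [Fintype κ] (g : α → κ) (F : α → ℝ) :
    ∑ j, ∑ i ∈ Finset.univ.filter (fun i => g i = j), F i = ∑ i, F i :=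
  Finset.sum_fiberwise _ _ _

/-- Double fibre decomposition. -/
lemma fibXY {𝒳 𝒴 𝒮 𝒯 : Type*} [Fintype 𝒳] [Fintype 𝒴] [Fintype 𝒮] [Fintype 𝒯]
    (s : 𝒳 → 𝒮) (t : 𝒴 → 𝒯) (F : 𝒳 → 𝒴 → ℝ) :
    ∑ x, ∑ y, F x y
      = ∑ s0, ∑ t0, ∑ x ∈ Finset.univ.filter (fun x => s x = s0),
          ∑ y ∈ Finset.univ.filter (fun y => t y = t0), F x y := by
  rw [← fib1 s (fun x => ∑ y, F x y)]
  refine Finset.sum_congr rfl fun s0 _ => ?_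
  calc ∑ x ∈ Finset.univ.filter (fun x => s x = s0), ∑ y, F x y
      = ∑ x ∈ Finset.univ.filter (fun x => s x = s0),
          ∑ t0, ∑ y ∈ Finset.univ.filter (fun y => t y = t0), F x y :=
        Finset.sum_congr rfl fun x _ => (fib1 t (fun y => F x y)).symm
    _ = _ := Finset.sum_comm

/-- Construction of the auxiliary variable `W'` for Wyner's common
information (Lemma 5 of the paper). -/
theorem wyner_construction
    [Fintype 𝒳] [Nonempty 𝒳] [Fintype 𝒴] [Nonempty 𝒴]
    [Fintype 𝒮] [Nonempty 𝒮] [Fintype 𝒯] [Nonempty 𝒯]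
    (p : 𝒳 × 𝒴 → ℝ) (hp : IsPMF p)
    (hX : ∀ x, 0 < margX p x) (hY : ∀ y, 0 < margY p y)
    (s : 𝒳 → 𝒮) (t : 𝒴 → 𝒯)
    (hs : SuffS p s) (ht : SuffT p t)
    {𝒲 : Type*} [Fintype 𝒲] [Nonempty 𝒲]
    (q : 𝒳 × 𝒴 × 𝒲 → ℝ) (hq : IsPMF q)
    (hmarg : ∀ x y, ∑ w, q (x, y, w) = p (x, y))
    (hCI : ∀ x y w, q (x, y, w) * (∑ x', ∑ y', q (x', y', w))
      = (∑ y', q (x, y', w)) * (∑ x', q (x', y, w))) :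
    ∃ q' : 𝒳 × 𝒴 × 𝒲 → ℝ,
      IsPMF q' ∧
      (∀ x y, ∑ w, q' (x, y, w) = p (x, y)) ∧
      -- (i) Markov relation (X,Y) - (S,T) - W'
      (∀ x y w, q' (x, y, w) * margST p s t (s x, t y)
        = p (x, y) * margSTW q' s t (s x) (t y) w) ∧
      -- (ii) (S,T,W') has the same distribution as (S,T,W)
      (∀ s0 t0 w, margSTW q' s t s0 t0 w = margSTW q s t s0 t0 w) ∧
      -- (iii) Markov chain X - S - W' - T - Y
      (∀ x y w,
        q' (x, y, w) * margS p s (s x) * margT p t (t y)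
            * (∑ x', ∑ y', q' (x', y', w))
          = margX p x * margY p y
            * (∑ x' ∈ Finset.univ.filter (fun x' => s x' = s x), ∑ y', q' (x', y', w))
            * (∑ y' ∈ Finset.univ.filter (fun y' => t y' = t y), ∑ x', q' (x', y', w))) ∧
      -- (iv) I_{q'}(W; (X,Y)) = I_q(W; (S,T)) = I_q(W; (X,Y)) - I_q(W; (X,Y) | (S,T))
      mutInfo (fun z : (𝒳 × 𝒴) × 𝒲 => q' (z.1.1, z.1.2, z.2))
        = mutInfo (fun z : (𝒮 × 𝒯) × 𝒲 => margSTW q s t z.1.1 z.1.2 z.2) ∧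
      mutInfo (fun z : (𝒮 × 𝒯) × 𝒲 => margSTW q s t z.1.1 z.1.2 z.2)
        = mutInfo (fun z : (𝒳 × 𝒴) × 𝒲 => q (z.1.1, z.1.2, z.2))
          - ∑ z : 𝒳 × 𝒴 × 𝒲, (if 0 < q z then
              q z * Real.log (q z * margST p s t (s z.1, t z.2.1)
                / (margSTW q s t (s z.1) (t z.2.1) z.2.2 * p (z.1, z.2.1))) else 0) := by
  classical
  obtain ⟨hp0, hp1⟩ := hp
  obtain ⟨hq0, hq1⟩ := hq
  -- basic positivity facts
  have hM0 : ∀ z : 𝒮 × 𝒯, 0 ≤ margST p s t z := by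
    intro z
    exact Finset.sum_nonneg fun x _ => Finset.sum_nonneg fun y _ => hp0 _
  have hN0 : ∀ s0 t0 w, 0 ≤ margSTW q s t s0 t0 w := by
    intro s0 t0 w
    exact Finset.sum_nonneg fun x _ => Finset.sum_nonneg fun y _ => hq0 _
  have hmemS : ∀ (s0 : 𝒮) (x : 𝒳), x ∈ Finset.univ.filter (fun x => s x = s0) ↔ s x = s0 := by
    intro s0 x; simp
  have hmemT : ∀ (t0 : 𝒯) (y : 𝒴), y ∈ Finset.univ.filter (fun y => t y = t0) ↔ t y = t0 := by
    intro t0 y; simp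
  -- the W-marginal of margSTW q is margST p
  have hNM : ∀ s0 t0, ∑ w, margSTW q s t s0 t0 w = margST p s t (s0, t0) := by
    intro s0 t0
    unfold margSTW margST
    rw [Finset.sum_comm]
    refine Finset.sum_congr rfl fun x _ => ?_
    rw [Finset.sum_comm]
    exact Finset.sum_congr rfl fun y _ => hmarg x y
  have hpleM : ∀ x y, p (x, y) ≤ margST p s t (s x, t y) := by
    intro x y
    unfold margST
    calc p (x, y) ≤ ∑ y' ∈ Finset.univ.filter (fun y' => t y' = t y), p (x, y') := by
          refine Finset.single_le_sum (fun i _ => hp0 _) ?_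
          exact (hmemT (t y) y).2 rfl
      _ ≤ _ := by
          refine Finset.single_le_sum
            (fun i _ => Finset.sum_nonneg fun j _ => hp0 _) ?_
          exact (hmemS (s x) x).2 rfl
  have hNleM : ∀ s0 t0 w, margSTW q s t s0 t0 w ≤ margST p s t (s0, t0) := by
    intro s0 t0 w
    rw [← hNM s0 t0]
    exact Finset.single_le_sum (f := fun w => margSTW q s t s0 t0 w)
      (fun i _ => hN0 s0 t0 i) (Finset.mem_univ w)
  have hMzeroN : ∀ s0 t0 w, margST p s t (s0, t0) = 0 → margSTW q s t s0 t0 w = 0 :=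
    fun s0 t0 w h => le_antisymm (h ▸ hNleM s0 t0 w) (hN0 _ _ _)
  have hMzerop : ∀ x y, margST p s t (s x, t y) = 0 → p (x, y) = 0 :=
    fun x y h => le_antisymm (h ▸ hpleM x y) (hp0 _)
  -- the construction
  set q' : 𝒳 × 𝒴 × 𝒲 → ℝ := fun z =>
    p (z.1, z.2.1) * margSTW q s t (s z.1) (t z.2.1) z.2.2
      / margST p s t (s z.1, t z.2.1) with hq'def
  have hq'eq : ∀ x y w, q' (x, y, w)
      = p (x, y) * margSTW q s t (s x) (t y) w / margST p s t (s x, t y) := fun _ _ _ => rfl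
  have hq'0 : ∀ z, 0 ≤ q' z := fun z =>
    div_nonneg (mul_nonneg (hp0 _) (hN0 _ _ _)) (hM0 _)
  -- fibre sums of q' recover margSTW q
  have hfiber : ∀ s0 t0 w,
      (∑ x ∈ Finset.univ.filter (fun x => s x = s0),
        ∑ y ∈ Finset.univ.filter (fun y => t y = t0), q' (x, y, w))
      = margSTW q s t s0 t0 w := by
    intro s0 t0 w
    have h1 : (∑ x ∈ Finset.univ.filter (fun x => s x = s0),
        ∑ y ∈ Finset.univ.filter (fun y => t y = t0), q' (x, y, w))
        = (∑ x ∈ Finset.univ.filter (fun x => s x = s0),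
            ∑ y ∈ Finset.univ.filter (fun y => t y = t0), p (x, y))
          * (margSTW q s t s0 t0 w / margST p s t (s0, t0)) := by
      rw [Finset.sum_mul]
      refine Finset.sum_congr rfl fun x hx => ?_
      rw [Finset.sum_mul]
      refine Finset.sum_congr rfl fun y hy => ?_
      rw [hq'eq, (hmemS s0 x).1 hx, (hmemT t0 y).1 hy, mul_div_assoc]
    rw [h1]
    show margST p s t (s0, t0) * (margSTW q s t s0 t0 w / margST p s t (s0, t0)) = _
    rcases eq_or_ne (margST p s t (s0, t0)) 0 with hM | hM
    · rw [hM, hMzeroN s0 t0 w hM, zero_div, mul_zero]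
    · rw [mul_div_cancel₀ _ hM]
  -- marginal of q' over w is p
  have hq'marg : ∀ x y, ∑ w, q' (x, y, w) = p (x, y) := by
    intro x y
    have : ∑ w, q' (x, y, w)
        = p (x, y) * (∑ w, margSTW q s t (s x) (t y) w) / margST p s t (s x, t y) := by
      rw [Finset.mul_sum, Finset.sum_div]
    rw [this, hNM]
    rcases eq_or_ne (margST p s t (s x, t y)) 0 with hM | hM
    · rw [hM, hMzerop x y hM, div_zero]
    · rw [mul_div_cancel_right₀ _ hM]
  -- margSTW q' = margSTW q
  have hii : ∀ s0 t0 w, margSTW q' s t s0 t0 w = margSTW q s t s0 t0 w :=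
    fun s0 t0 w => hfiber s0 t0 w
  -- q' is a pmf
  have hq'pmf : IsPMF q' := by
    refine ⟨hq'0, ?_⟩
    rw [Fintype.sum_prod_type]
    have : ∀ x : 𝒳, ∑ z : 𝒴 × 𝒲, q' (x, z.1, z.2) = ∑ y, p (x, y) := by
      intro x
      rw [Fintype.sum_prod_type]
      exact Finset.sum_congr rfl fun y _ => hq'marg x y
    calc ∑ x, ∑ z : 𝒴 × 𝒲, q' (x, z.1, z.2) = ∑ x, ∑ y, p (x, y) :=
          Finset.sum_congr rfl fun x _ => this x
      _ = ∑ z : 𝒳 × 𝒴, p z := (Fintype.sum_prod_type _).symm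
      _ = 1 := hp1
  -- property (i)
  have h_i : ∀ x y w, q' (x, y, w) * margST p s t (s x, t y)
      = p (x, y) * margSTW q' s t (s x) (t y) w := by
    intro x y w
    rw [hii, hq'eq]
    rcases eq_or_ne (margST p s t (s x, t y)) 0 with hM | hM
    · rw [hM, hMzerop x y hM, hMzeroN _ _ w hM]
      ring
    · rw [div_mul_cancel₀ _ hM]
  -- sufficiency consequences
  have hA1 : ∀ x y, (∑ x' ∈ Finset.univ.filter (fun x' => s x' = s x), p (x', y)) * margX p x
      = margS p s (s x) * p (x, y) := by
    intro x y
    rw [Finset.sum_mul]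
    unfold margS
    rw [Finset.sum_mul]
    refine Finset.sum_congr rfl fun x' hx' => ?_
    have h := hs x x' y ((hmemS (s x) x').1 hx').symm
    linear_combination -h
  have hA2 : ∀ x y, (∑ y' ∈ Finset.univ.filter (fun y' => t y' = t y), p (x, y')) * margY p y
      = margT p t (t y) * p (x, y) := by
    intro x y
    rw [Finset.sum_mul]
    unfold margT
    rw [Finset.sum_mul]
    refine Finset.sum_congr rfl fun y' hy' => ?_
    have h := ht x y y' ((hmemT (t y) y').1 hy').symm
    linear_combination -h
  have hA : ∀ x y, margST p s t (s x, t y) * margX p x * margY p y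
      = margS p s (s x) * margT p t (t y) * p (x, y) := by
    intro x y
    have e1 : margST p s t (s x, t y)
        = ∑ y' ∈ Finset.univ.filter (fun y' => t y' = t y),
            ∑ x' ∈ Finset.univ.filter (fun x' => s x' = s x), p (x', y') := by
      unfold margST; exact Finset.sum_comm
    rw [e1, Finset.sum_mul, Finset.sum_mul]
    have e2 : ∀ y' ∈ Finset.univ.filter (fun y' => t y' = t y),
        (∑ x' ∈ Finset.univ.filter (fun x' => s x' = s x), p (x', y'))
            * margX p x * margY p y
          = margS p s (s x) * (p (x, y') * margY p y) := by
      intro y' _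
      have := hA1 x y'
      linear_combination margY p y * this
    rw [Finset.sum_congr rfl e2, ← Finset.mul_sum, ← Finset.sum_mul, hA2 x y]
    ring
  -- conditional independence for (S, T, W)
  have hB : ∀ s0 t0 w, margSTW q s t s0 t0 w * (∑ x, ∑ y, q (x, y, w))
      = (∑ x ∈ Finset.univ.filter (fun x => s x = s0), ∑ y, q (x, y, w))
        * (∑ y ∈ Finset.univ.filter (fun y => t y = t0), ∑ x, q (x, y, w)) := by
    intro s0 t0 w
    unfold margSTW
    calc (∑ x ∈ Finset.univ.filter (fun x => s x = s0),
          ∑ y ∈ Finset.univ.filter (fun y => t y = t0), q (x, y, w))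
          * (∑ x, ∑ y, q (x, y, w))
        = ∑ x ∈ Finset.univ.filter (fun x => s x = s0),
            ∑ y ∈ Finset.univ.filter (fun y => t y = t0),
              q (x, y, w) * (∑ x', ∑ y', q (x', y', w)) := by
          rw [Finset.sum_mul]
          exact Finset.sum_congr rfl fun x _ => Finset.sum_mul _ _ _
      _ = ∑ x ∈ Finset.univ.filter (fun x => s x = s0),
            ∑ y ∈ Finset.univ.filter (fun y => t y = t0),
              (∑ y', q (x, y', w)) * (∑ x', q (x', y, w)) :=
          Finset.sum_congr rfl fun x _ => Finset.sum_congr rfl fun y _ => hCI x y w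
      _ = _ := (Finset.sum_mul_sum _ _ _ _).symm
  -- sums of q' agree with sums of q
  have hq'W : ∀ w, (∑ x, ∑ y, q' (x, y, w)) = ∑ x, ∑ y, q (x, y, w) := by
    intro w
    rw [fibXY s t (fun x y => q' (x, y, w)), fibXY s t (fun x y => q (x, y, w))]
    exact Finset.sum_congr rfl fun s0 _ => Finset.sum_congr rfl fun t0 _ => hfiber s0 t0 w
  have hfibS : ∀ (r : 𝒳 × 𝒴 × 𝒲 → ℝ) (s0 : 𝒮) (w : 𝒲),
      (∑ x ∈ Finset.univ.filter (fun x => s x = s0), ∑ y, r (x, y, w))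
        = ∑ t0, ∑ x ∈ Finset.univ.filter (fun x => s x = s0),
            ∑ y ∈ Finset.univ.filter (fun y => t y = t0), r (x, y, w) := by
    intro r s0 w
    calc (∑ x ∈ Finset.univ.filter (fun x => s x = s0), ∑ y, r (x, y, w))
        = ∑ x ∈ Finset.univ.filter (fun x => s x = s0),
            ∑ t0, ∑ y ∈ Finset.univ.filter (fun y => t y = t0), r (x, y, w) :=
          Finset.sum_congr rfl fun x _ => (fib1 t (fun y => r (x, y, w))).symm
      _ = _ := Finset.sum_comm
  have hfibT : ∀ (r : 𝒳 × 𝒴 × 𝒲 → ℝ) (t0 : 𝒯) (w : 𝒲),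
      (∑ y ∈ Finset.univ.filter (fun y => t y = t0), ∑ x, r (x, y, w))
        = ∑ s0, ∑ x ∈ Finset.univ.filter (fun x => s x = s0),
            ∑ y ∈ Finset.univ.filter (fun y => t y = t0), r (x, y, w) := by
    intro r t0 w
    calc (∑ y ∈ Finset.univ.filter (fun y => t y = t0), ∑ x, r (x, y, w))
        = ∑ y ∈ Finset.univ.filter (fun y => t y = t0),
            ∑ s0, ∑ x ∈ Finset.univ.filter (fun x => s x = s0), r (x, y, w) :=
          Finset.sum_congr rfl fun y _ => (fib1 s (fun x => r (x, y, w))).symm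
      _ = ∑ s0, ∑ y ∈ Finset.univ.filter (fun y => t y = t0),
            ∑ x ∈ Finset.univ.filter (fun x => s x = s0), r (x, y, w) := Finset.sum_comm
      _ = _ := Finset.sum_congr rfl fun s0 _ => Finset.sum_comm
  have hq'SW : ∀ s0 w, (∑ x ∈ Finset.univ.filter (fun x => s x = s0), ∑ y, q' (x, y, w))
      = ∑ x ∈ Finset.univ.filter (fun x => s x = s0), ∑ y, q (x, y, w) := by
    intro s0 w
    rw [hfibS q' s0 w, hfibS q s0 w]
    exact Finset.sum_congr rfl fun t0 _ => hfiber s0 t0 w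
  have hq'TW : ∀ t0 w, (∑ y ∈ Finset.univ.filter (fun y => t y = t0), ∑ x, q' (x, y, w))
      = ∑ y ∈ Finset.univ.filter (fun y => t y = t0), ∑ x, q (x, y, w) := by
    intro t0 w
    rw [hfibT q' t0 w, hfibT q t0 w]
    exact Finset.sum_congr rfl fun s0 _ => hfiber s0 t0 w
  -- property (iii)
  have h_iii : ∀ x y w,
      q' (x, y, w) * margS p s (s x) * margT p t (t y) * (∑ x', ∑ y', q' (x', y', w))
        = margX p x * margY p y
          * (∑ x' ∈ Finset.univ.filter (fun x' => s x' = s x), ∑ y', q' (x', y', w))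
          * (∑ y' ∈ Finset.univ.filter (fun y' => t y' = t y), ∑ x', q' (x', y', w)) := by
    intro x y w
    rw [hq'W w, hq'SW (s x) w, hq'TW (t y) w, hq'eq]
    have hb := hB (s x) (t y) w
    rcases eq_or_ne (margST p s t (s x, t y)) 0 with hM | hM
    · rw [hM, div_zero]
      rw [hMzeroN _ _ w hM, zero_mul] at hb
      linear_combination (margX p x * margY p y) * hb
    · have ha := hA x y
      rw [div_mul_eq_mul_div, div_mul_eq_mul_div, div_mul_eq_mul_div, div_eq_iff hM]
      linear_combination (margST p s t (s x, t y) * margX p x * margY p y) * hb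
        - (margSTW q s t (s x) (t y) w * (∑ x', ∑ y', q (x', y', w))) * ha
  -- the common value of the three mutual informations
  set L : 𝒮 → 𝒯 → 𝒲 → ℝ := fun s0 t0 w =>
    Real.log (margSTW q s t s0 t0 w
      / (margST p s t (s0, t0) * (∑ x, ∑ y, q (x, y, w)))) with hLdef
  have hKey : ∀ (r : 𝒳 × 𝒴 × 𝒲 → ℝ),
      (∀ s0 t0 w, (∑ x ∈ Finset.univ.filter (fun x => s x = s0),
          ∑ y ∈ Finset.univ.filter (fun y => t y = t0), r (x, y, w))
        = margSTW q s t s0 t0 w) →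
      (∑ x, ∑ y, ∑ w, r (x, y, w) * L (s x) (t y) w)
        = ∑ s0, ∑ t0, ∑ w, margSTW q s t s0 t0 w * L s0 t0 w := by
    intro r hr
    rw [fibXY s t (fun x y => ∑ w, r (x, y, w) * L (s x) (t y) w)]
    refine Finset.sum_congr rfl fun s0 _ => Finset.sum_congr rfl fun t0 _ => ?_
    calc (∑ x ∈ Finset.univ.filter (fun x => s x = s0),
          ∑ y ∈ Finset.univ.filter (fun y => t y = t0), ∑ w, r (x, y, w) * L (s x) (t y) w)
        = ∑ x ∈ Finset.univ.filter (fun x => s x = s0),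
            ∑ y ∈ Finset.univ.filter (fun y => t y = t0), ∑ w, r (x, y, w) * L s0 t0 w := by
          refine Finset.sum_congr rfl fun x hx => Finset.sum_congr rfl fun y hy => ?_
          rw [(hmemS s0 x).1 hx, (hmemT t0 y).1 hy]
      _ = ∑ x ∈ Finset.univ.filter (fun x => s x = s0),
            ∑ w, ∑ y ∈ Finset.univ.filter (fun y => t y = t0), r (x, y, w) * L s0 t0 w :=
          Finset.sum_congr rfl fun x _ => Finset.sum_comm
      _ = ∑ w, ∑ x ∈ Finset.univ.filter (fun x => s x = s0),
            ∑ y ∈ Finset.univ.filter (fun y => t y = t0), r (x, y, w) * L s0 t0 w :=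
          Finset.sum_comm
      _ = ∑ w, margSTW q s t s0 t0 w * L s0 t0 w := by
          refine Finset.sum_congr rfl fun w _ => ?_
          rw [← hr s0 t0 w, Finset.sum_mul]
          exact Finset.sum_congr rfl fun x _ => (Finset.sum_mul _ _ _).symm
  have hsum3 : ∀ (f : 𝒮 → 𝒯 → 𝒲 → ℝ),
      (∑ z : (𝒮 × 𝒯) × 𝒲, f z.1.1 z.1.2 z.2) = ∑ s0, ∑ t0, ∑ w, f s0 t0 w := fun f =>
    (Fintype.sum_prod_type _).trans (Fintype.sum_prod_type _)
  have hsumXYW : ∀ (f : 𝒳 → 𝒴 → 𝒲 → ℝ),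
      (∑ z : (𝒳 × 𝒴) × 𝒲, f z.1.1 z.1.2 z.2) = ∑ x, ∑ y, ∑ w, f x y w := fun f =>
    (Fintype.sum_prod_type _).trans (Fintype.sum_prod_type _)
  have htriple : ∀ (f : 𝒳 → 𝒴 → 𝒲 → ℝ),
      (∑ z : 𝒳 × 𝒴 × 𝒲, f z.1 z.2.1 z.2.2) = ∑ x, ∑ y, ∑ w, f x y w := fun f =>
    (Fintype.sum_prod_type _).trans
      (Finset.sum_congr rfl fun x _ => Fintype.sum_prod_type _)
  have hNqW : ∀ w, (∑ a : 𝒮 × 𝒯, margSTW q s t a.1 a.2 w) = ∑ x, ∑ y, q (x, y, w) := by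
    intro w
    rw [Fintype.sum_prod_type]
    exact (fibXY s t (fun x y => q (x, y, w))).symm
  have hqAW : ∀ w, (∑ a : 𝒳 × 𝒴, q (a.1, a.2, w)) = ∑ x, ∑ y, q (x, y, w) := fun w =>
    Fintype.sum_prod_type _
  have hq'AW : ∀ w, (∑ a : 𝒳 × 𝒴, q' (a.1, a.2, w)) = ∑ x, ∑ y, q (x, y, w) := by
    intro w
    rw [Fintype.sum_prod_type]
    exact hq'W w
  have hC1 : mutInfo (fun z : (𝒳 × 𝒴) × 𝒲 => q' (z.1.1, z.1.2, z.2))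
      = ∑ s0, ∑ t0, ∑ w, margSTW q s t s0 t0 w * L s0 t0 w := by
    refine (hsumXYW (fun x y w =>
      if 0 < q' (x, y, w) then
        q' (x, y, w) * Real.log (q' (x, y, w)
          / ((∑ b, q' (x, y, b)) * (∑ a : 𝒳 × 𝒴, q' (a.1, a.2, w))))
      else 0)).trans ?_
    rw [← hKey q' hfiber]
    refine Finset.sum_congr rfl fun x _ => Finset.sum_congr rfl fun y _ =>
      Finset.sum_congr rfl fun w _ => ?_
    rw [hq'marg x y, hq'AW w]
    by_cases h : 0 < q' (x, y, w)
    · rw [if_pos h]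
      have hMne : margST p s t (s x, t y) ≠ 0 := by
        intro h0
        rw [hq'eq, h0, div_zero] at h
        exact lt_irrefl 0 h
      have hpne : p (x, y) ≠ 0 := by
        intro h0
        rw [hq'eq, h0, zero_mul, zero_div] at h
        exact lt_irrefl 0 h
      congr 1
      rw [hLdef, hq'eq, div_div,
        show margST p s t (s x, t y) * (p (x, y) * (∑ x, ∑ y, q (x, y, w)))
          = p (x, y) * (margST p s t (s x, t y) * (∑ x, ∑ y, q (x, y, w))) by ring,
        mul_div_mul_left _ _ hpne]
    · rw [if_neg h, le_antisymm (not_lt.1 h) (hq'0 (x, y, w)), zero_mul]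
  have hC2 : mutInfo (fun z : (𝒮 × 𝒯) × 𝒲 => margSTW q s t z.1.1 z.1.2 z.2)
      = ∑ s0, ∑ t0, ∑ w, margSTW q s t s0 t0 w * L s0 t0 w := by
    refine (hsum3 (fun s0 t0 w =>
      if 0 < margSTW q s t s0 t0 w then
        margSTW q s t s0 t0 w * Real.log (margSTW q s t s0 t0 w
          / ((∑ b, margSTW q s t s0 t0 b) * (∑ a : 𝒮 × 𝒯, margSTW q s t a.1 a.2 w)))
      else 0)).trans ?_
    refine Finset.sum_congr rfl fun s0 _ => Finset.sum_congr rfl fun t0 _ =>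
      Finset.sum_congr rfl fun w _ => ?_
    rw [hNM s0 t0, hNqW w]
    by_cases h : 0 < margSTW q s t s0 t0 w
    · rw [if_pos h, hLdef]
    · rw [if_neg h, le_antisymm (not_lt.1 h) (hN0 s0 t0 w), zero_mul]
  have hC3 : mutInfo (fun z : (𝒳 × 𝒴) × 𝒲 => q (z.1.1, z.1.2, z.2))
      - (∑ z : 𝒳 × 𝒴 × 𝒲, (if 0 < q z then
          q z * Real.log (q z * margST p s t (s z.1, t z.2.1)
            / (margSTW q s t (s z.1) (t z.2.1) z.2.2 * p (z.1, z.2.1))) else 0))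
      = ∑ s0, ∑ t0, ∑ w, margSTW q s t s0 t0 w * L s0 t0 w := by
    have hIq : mutInfo (fun z : (𝒳 × 𝒴) × 𝒲 => q (z.1.1, z.1.2, z.2))
        = ∑ x, ∑ y, ∑ w, (if 0 < q (x, y, w) then
            q (x, y, w) * Real.log (q (x, y, w)
              / ((∑ b, q (x, y, b)) * (∑ a : 𝒳 × 𝒴, q (a.1, a.2, w))))
          else 0) := hsumXYW (fun x y w =>
      if 0 < q (x, y, w) then
        q (x, y, w) * Real.log (q (x, y, w)
          / ((∑ b, q (x, y, b)) * (∑ a : 𝒳 × 𝒴, q (a.1, a.2, w))))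
      else 0)
    have hD : (∑ z : 𝒳 × 𝒴 × 𝒲, (if 0 < q z then
          q z * Real.log (q z * margST p s t (s z.1, t z.2.1)
            / (margSTW q s t (s z.1) (t z.2.1) z.2.2 * p (z.1, z.2.1))) else 0))
        = ∑ x, ∑ y, ∑ w, (if 0 < q (x, y, w) then
            q (x, y, w) * Real.log (q (x, y, w) * margST p s t (s x, t y)
              / (margSTW q s t (s x) (t y) w * p (x, y))) else 0) := htriple (fun x y w =>
      if 0 < q (x, y, w) then
        q (x, y, w) * Real.log (q (x, y, w) * margST p s t (s x, t y)
          / (margSTW q s t (s x) (t y) w * p (x, y))) else 0)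
    rw [hIq, hD, ← hKey q (fun s0 t0 w => rfl), ← Finset.sum_sub_distrib]
    refine Finset.sum_congr rfl fun x _ => ?_
    rw [← Finset.sum_sub_distrib]
    refine Finset.sum_congr rfl fun y _ => ?_
    rw [← Finset.sum_sub_distrib]
    refine Finset.sum_congr rfl fun w _ => ?_
    by_cases h : 0 < q (x, y, w)
    · rw [if_pos h, if_pos h, hmarg x y, hqAW w]
      have hple : q (x, y, w) ≤ p (x, y) := by
        rw [← hmarg x y]
        exact Finset.single_le_sum (f := fun w => q (x, y, w))
          (fun i _ => hq0 (x, y, i)) (Finset.mem_univ w)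
      have hp_pos : 0 < p (x, y) := lt_of_lt_of_le h hple
      have hqW_pos : 0 < ∑ x, ∑ y, q (x, y, w) := by
        refine lt_of_lt_of_le h ?_
        calc q (x, y, w) ≤ ∑ y, q (x, y, w) :=
              Finset.single_le_sum (f := fun y => q (x, y, w))
                (fun i _ => hq0 (x, i, w)) (Finset.mem_univ y)
          _ ≤ _ := Finset.single_le_sum (f := fun x => ∑ y, q (x, y, w))
                (fun i _ => Finset.sum_nonneg fun j _ => hq0 (i, j, w)) (Finset.mem_univ x)
      have hN_pos : 0 < margSTW q s t (s x) (t y) w := by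
        refine lt_of_lt_of_le h ?_
        unfold margSTW
        calc q (x, y, w)
            ≤ ∑ y' ∈ Finset.univ.filter (fun y' => t y' = t y), q (x, y', w) :=
              Finset.single_le_sum (f := fun y' => q (x, y', w))
                (fun i _ => hq0 (x, i, w)) ((hmemT (t y) y).2 rfl)
          _ ≤ _ := Finset.single_le_sum
                (f := fun x' => ∑ y' ∈ Finset.univ.filter (fun y' => t y' = t y), q (x', y', w))
                (fun i _ => Finset.sum_nonneg fun j _ => hq0 (i, j, w))
                ((hmemS (s x) x).2 rfl)
      have hM_pos : 0 < margST p s t (s x, t y) :=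
        lt_of_lt_of_le hN_pos (hNleM (s x) (t y) w)
      have hAne : q (x, y, w) / (p (x, y) * ∑ x, ∑ y, q (x, y, w)) ≠ 0 :=
        ne_of_gt (div_pos h (mul_pos hp_pos hqW_pos))
      have hBne : q (x, y, w) * margST p s t (s x, t y)
          / (margSTW q s t (s x) (t y) w * p (x, y)) ≠ 0 :=
        ne_of_gt (div_pos (mul_pos h hM_pos) (mul_pos hN_pos hp_pos))
      rw [← mul_sub, ← Real.log_div hAne hBne, hLdef]
      congr 1
      have h1 : q (x, y, w) ≠ 0 := ne_of_gt h
      have h2 : p (x, y) ≠ 0 := ne_of_gt hp_pos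
      have h3 : (∑ x, ∑ y, q (x, y, w)) ≠ 0 := ne_of_gt hqW_pos
      have h4 : margSTW q s t (s x) (t y) w ≠ 0 := ne_of_gt hN_pos
      have h5 : margST p s t (s x, t y) ≠ 0 := ne_of_gt hM_pos
      congr 1
      field_simp
    · rw [if_neg h, if_neg h, le_antisymm (not_lt.1 h) (hq0 (x, y, w)), zero_mul, sub_zero]
  exact ⟨q', hq'pmf, hq'marg, h_i, hii, h_iii, hC1.trans hC2.symm,
    hC2.trans (by linarith [hC3])⟩

end
end

section
/- If s : 𝒳 → 𝒮 and t : 𝒴 → 𝒯 are both sufficient, then the Gács–Körner common information is preserved: C_GK(p) = C_GK(pST). -/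
open Finset

noncomputable section
open scoped Classical

variable {𝒳 𝒴 𝒮 𝒯 : Type*}

lemma key_sum [Fintype 𝒳] [Fintype 𝒴] [Fintype 𝒮] [Fintype 𝒯]
    (p : 𝒳 × 𝒴 → ℝ) (s : 𝒳 → 𝒮) (t : 𝒴 → 𝒯) (Q : 𝒮 → 𝒯 → Prop)
    [inst : ∀ a b, Decidable (Q a b)] :
    ∑ w : 𝒮 × 𝒯, (if Q w.1 w.2 then margST p s t w else 0)
      = ∑ z : 𝒳 × 𝒴, (if Q (s z.1) (t z.2) then p z else 0) := by
  rw [Fintype.sum_prod_type, Fintype.sum_prod_type]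
  have h1 : ∀ s0 t0, (if Q s0 t0 then margST p s t (s0, t0) else 0)
      = ∑ x ∈ univ.filter (fun x => s x = s0),
          ∑ y ∈ univ.filter (fun y => t y = t0),
            (if Q (s x) (t y) then p (x, y) else 0) := by
    intro s0 t0
    have h2 : ∑ x ∈ univ.filter (fun x => s x = s0),
          ∑ y ∈ univ.filter (fun y => t y = t0),
            (if Q (s x) (t y) then p (x, y) else 0)
        = ∑ x ∈ univ.filter (fun x => s x = s0),
          ∑ y ∈ univ.filter (fun y => t y = t0),
            (if Q s0 t0 then p (x, y) else 0) := by
      refine Finset.sum_congr rfl fun x hx => Finset.sum_congr rfl fun y hy => ?_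
      rw [(mem_filter.1 hx).2, (mem_filter.1 hy).2]
    rw [h2]
    by_cases h : Q s0 t0 <;> simp [h, margST]
  calc ∑ s0, ∑ t0, (if Q s0 t0 then margST p s t (s0, t0) else 0)
      = ∑ s0, ∑ t0, ∑ x ∈ univ.filter (fun x => s x = s0),
          ∑ y ∈ univ.filter (fun y => t y = t0),
            (if Q (s x) (t y) then p (x, y) else 0) :=
        Finset.sum_congr rfl fun s0 _ => Finset.sum_congr rfl fun t0 _ => h1 s0 t0
    _ = ∑ s0, ∑ x ∈ univ.filter (fun x => s x = s0),
          ∑ t0, ∑ y ∈ univ.filter (fun y => t y = t0),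
            (if Q (s x) (t y) then p (x, y) else 0) :=
        Finset.sum_congr rfl fun s0 _ => Finset.sum_comm
    _ = ∑ s0, ∑ x ∈ univ.filter (fun x => s x = s0),
          ∑ y, (if Q (s x) (t y) then p (x, y) else 0) := by
        refine Finset.sum_congr rfl fun s0 _ => Finset.sum_congr rfl fun x _ => ?_
        exact Finset.sum_fiberwise _ _ _
    _ = ∑ x, ∑ y, (if Q (s x) (t y) then p (x, y) else 0) :=
        Finset.sum_fiberwise _ _ _

lemma fiber_sum_eq {W : Type*} [Fintype 𝒳] [Fintype 𝒴] [Fintype 𝒮] [Fintype 𝒯]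
    (p : 𝒳 × 𝒴 → ℝ) (s : 𝒳 → 𝒮) (t : 𝒴 → 𝒯) (F : 𝒮 → W) (w : W)
    [inst : DecidableEq W] :
    ∑ s0 ∈ univ.filter (fun s0 => F s0 = w), ∑ t0, margST p s t (s0, t0)
      = ∑ x ∈ univ.filter (fun x => F (s x) = w), ∑ y, p (x, y) := by
  rw [Finset.sum_filter, Finset.sum_filter]
  have l1 : ∀ s0 : 𝒮, (if F s0 = w then ∑ t0, margST p s t (s0, t0) else 0)
      = ∑ t0, if F s0 = w then margST p s t (s0, t0) else 0 := by
    intro s0; split <;> simp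
  have l2 : ∀ x : 𝒳, (if F (s x) = w then ∑ y, p (x, y) else 0)
      = ∑ y, if F (s x) = w then p (x, y) else 0 := by
    intro x; split <;> simp
  simp only [l1, l2]
  have h := key_sum p s t (fun a _ => F a = w)
  rw [Fintype.sum_prod_type, Fintype.sum_prod_type] at h
  exact h

/-- Gács–Körner common information is preserved under sufficient
statistics. -/
theorem gacsKorner_preserved
    [Fintype 𝒳] [Nonempty 𝒳] [Fintype 𝒴] [Nonempty 𝒴]
    [Fintype 𝒮] [Nonempty 𝒮] [Fintype 𝒯] [Nonempty 𝒯]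
    (p : 𝒳 × 𝒴 → ℝ) (hp : IsPMF p)
    (hX : ∀ x, 0 < margX p x) (hY : ∀ y, 0 < margY p y)
    (s : 𝒳 → 𝒮) (t : 𝒴 → 𝒯)
    (hs : SuffS p s) (ht : SuffT p t) :
    gkCI p = gkCI (margST p s t) := by
  unfold gkCI
  congr 1
  ext c
  simp only [Set.mem_setOf_eq]
  constructor
  · rintro ⟨n, f, g, hzero, rfl⟩
    -- p z = 0 whenever f z.1 ≠ g z.2
    have hp0 : ∀ z : 𝒳 × 𝒴, f z.1 ≠ g z.2 → p z = 0 := by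
      intro z hz
      have hnn : ∀ z ∈ (univ : Finset (𝒳 × 𝒴)),
          (0:ℝ) ≤ if f z.1 ≠ g z.2 then p z else 0 := by
        intro z _; split
        · exact hp.1 z
        · exact le_rfl
      have := (Finset.sum_eq_zero_iff_of_nonneg hnn).1 hzero z (mem_univ z)
      simpa [hz] using this
    have hpos : ∀ z : 𝒳 × 𝒴, 0 < p z → f z.1 = g z.2 := by
      intro z h
      by_contra hc
      rw [hp0 z hc] at h
      exact lt_irrefl 0 h
    -- f is constant on fibers of s
    have hfconst : ∀ x x', s x = s x' → f x = f x' := by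
      intro x x' hss
      obtain ⟨y, hy⟩ : ∃ y, 0 < p (x, y) := by
        by_contra hc
        push_neg at hc
        have hm : margX p x = 0 := by
          unfold margX
          exact Finset.sum_eq_zero fun y _ => le_antisymm (hc y) (hp.1 _)
        exact absurd hm (ne_of_gt (hX x))
      have h1 : f x = g y := hpos (x, y) hy
      have heq := hs x x' y hss
      have h2 : 0 < p (x', y) := by
        rcases (hp.1 (x', y)).lt_or_eq with h | h
        · exact h
        · exfalso
          rw [← h, zero_mul] at heq
          exact (ne_of_gt (mul_pos hy (hX x'))) heq
      have h3 : f x' = g y := hpos (x', y) h2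
      rw [h1, h3]
    -- g is constant on fibers of t
    have hgconst : ∀ y y', t y = t y' → g y = g y' := by
      intro y y' htt
      obtain ⟨x, hx⟩ : ∃ x, 0 < p (x, y) := by
        by_contra hc
        push_neg at hc
        have hm : margY p y = 0 := by
          unfold margY
          exact Finset.sum_eq_zero fun x _ => le_antisymm (hc x) (hp.1 _)
        exact absurd hm (ne_of_gt (hY y))
      have h1 : f x = g y := hpos (x, y) hx
      have heq := ht x y y' htt
      have h2 : 0 < p (x, y') := by
        rcases (hp.1 (x, y')).lt_or_eq with h | h
        · exact h
        · exfalso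
          rw [← h, zero_mul] at heq
          exact (ne_of_gt (mul_pos hx (hY y'))) heq
      have h3 : f x = g y' := hpos (x, y') h2
      rw [← h1, h3]
    -- lift to functions on 𝒮 and 𝒯
    set F : 𝒮 → Fin n := fun s0 =>
      f (if h : ∃ x, s x = s0 then h.choose else Classical.arbitrary 𝒳) with hFdef
    set G : 𝒯 → Fin n := fun t0 =>
      g (if h : ∃ y, t y = t0 then h.choose else Classical.arbitrary 𝒴) with hGdef
    have hF : ∀ x, F (s x) = f x := by
      intro x
      have h : ∃ x', s x' = s x := ⟨x, rfl⟩
      rw [hFdef]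
      simp only [dif_pos h]
      exact hfconst _ _ h.choose_spec
    have hG : ∀ y, G (t y) = g y := by
      intro y
      have h : ∃ y', t y' = t y := ⟨y, rfl⟩
      rw [hGdef]
      simp only [dif_pos h]
      exact hgconst _ _ h.choose_spec
    refine ⟨n, F, G, ?_, ?_⟩
    · rw [key_sum p s t (fun a b => F a ≠ G b)]
      simp only [hF, hG]
      exact hzero
    · congr 1
      funext w
      rw [fiber_sum_eq p s t F w]
      apply Finset.sum_congr
      · apply Finset.filter_congr
        intro x _
        simp [hF x]
      · intro x _; rfl
  · rintro ⟨n, f, g, hzero, rfl⟩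
    refine ⟨n, fun x => f (s x), fun y => g (t y), ?_, ?_⟩
    · rw [← key_sum p s t (fun a b => f a ≠ g b)]
      exact hzero
    · congr 1
      funext w
      exact fiber_sum_eq p s t f w

end
end
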